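/- arXiv:2307.01997 — 4 statements merged into one kernel-verified Lean document; each statement's English description precedes it below -/
import Mathlib

section
/- Let K be a superalgebra whose largest purely even quotient K̄ = K/I_K is a field and whose ideal I_K is nilpotent. Then a K-supermodule V is free (has a homogeneous K-free basis) if and only if it is flat as a K-module. -/
open scoped TensorProduct

/-- The multiplication map `I ⊗[R] V → V` for an `R`-subspace `I` of `A`. -/
noncomputable def mulTensor {R A V : Type*} [CommRing R] [Ring A] [Algebra R A]
    [AddCommGroup V] [Module R V] [Module A V] [IsScalarTower R A V]
    [SMulCommClass A R V] (I : Submodule R A) : (↥I ⊗[R] V) →ₗ[R] V :=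
  TensorProduct.lift (((Algebra.lsmul R R V).toLinearMap).comp I.subtype)

/-- Flatness of a left module `V` over a possibly noncommutative ring `A` (an
`R`-algebra), via the ideal criterion: for every right ideal `I` of `A`, the kernel of
the multiplication map `I ⊗[R] V → V` is exactly the submodule of relations defining
`I ⊗_A V`; equivalently `I ⊗_A V → V` is injective for every right ideal `I`. -/
def IsFlatOver (R : Type*) {A V : Type*} [CommRing R] [Ring A] [Algebra R A]
    [AddCommGroup V] [Module R V] [Module A V] [IsScalarTower R A V]
    [SMulCommClass A R V] : Prop :=
  ∀ I : Submodule R A, (∀ x ∈ I, ∀ a : A, x * a ∈ I) →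
    ∀ z : ↥I ⊗[R] V, mulTensor I z = 0 →
      z ∈ Submodule.span R {w : ↥I ⊗[R] V |
        ∃ (x : ↥I) (a : A) (v : V) (h : (x : A) * a ∈ I),
          w = (⟨(x : A) * a, h⟩ : ↥I) ⊗ₜ[R] v - x ⊗ₜ[R] (a • v)}

/-!
STATEMENT 2: Let `K` be a superalgebra whose largest purely even quotient `K/I_K` is a
field (elementwise: `K ≠ 0` and every even element outside the ideal `I_K = (K₁)` is a
unit) and whose ideal `I_K` is nilpotent.  Then a `K`-supermodule `V` is free on a
homogeneous basis if and only if it is flat.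
-/

theorem mulTensor_tmul {R A V : Type*} [CommRing R] [Ring A] [Algebra R A]
    [AddCommGroup V] [Module R V] [Module A V] [IsScalarTower R A V]
    [SMulCommClass A R V] (I : Submodule R A) (x : ↥I) (v : V) :
    mulTensor I (x ⊗ₜ[R] v) = (x : A) • v := rfl

theorem flat_of_basis {R A V : Type*} [CommRing R] [Ring A] [Algebra R A]
    [AddCommGroup V] [Module R V] [Module A V] [IsScalarTower R A V]
    [SMulCommClass A R V] {ι : Type*} (b : Module.Basis ι A V) :
    IsFlatOver R (A := A) (V := V) := by
  intro I hI z hz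
  set S : Submodule R (↥I ⊗[R] V) := Submodule.span R {w : ↥I ⊗[R] V |
        ∃ (x : ↥I) (a : A) (v : V) (h : (x : A) * a ∈ I),
          w = (⟨(x : A) * a, h⟩ : ↥I) ⊗ₜ[R] v - x ⊗ₜ[R] (a • v)} with hS
  have hgen : ∀ (x : ↥I) (a : A) (v : V) (h : (x : A) * a ∈ I),
      (⟨(x : A) * a, h⟩ : ↥I) ⊗ₜ[R] v - x ⊗ₜ[R] (a • v) ∈ S := by
    intro x a v h
    exact Submodule.subset_span ⟨x, a, v, h, rfl⟩
  have key : ∀ z : ↥I ⊗[R] V, ∃ f : ι →₀ ↥I,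
      z - f.sum (fun j x => x ⊗ₜ[R] (b j)) ∈ S := by
    intro z
    induction z with
    | zero => exact ⟨0, by simp⟩
    | tmul x v =>
        refine ⟨(b.repr v).mapRange (fun c => ⟨(x : A) * c, hI x x.2 c⟩)
          (by ext; simp), ?_⟩
        rw [Finsupp.sum_mapRange_index (by intro a; simp)]
        have hv : x ⊗ₜ[R] v = (b.repr v).sum fun j c => x ⊗ₜ[R] (c • b j) := by
          conv_lhs => rw [← b.linearCombination_repr v]
          rw [Finsupp.linearCombination_apply, Finsupp.sum, Finsupp.sum, TensorProduct.tmul_sum]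
        rw [hv, Finsupp.sum, Finsupp.sum]
        refine cast (congrArg (· ∈ S) (Finset.sum_sub_distrib
          (f := fun j => x ⊗ₜ[R] ((b.repr v) j • b j))
          (g := fun j => (⟨(x : A) * (b.repr v j), hI x x.2 _⟩ : ↥I) ⊗ₜ[R] b j))) ?_
        refine Submodule.sum_mem S fun j hj => ?_
        have := hgen x (b.repr v j) (b j) (hI x x.2 _)
        have h2 : x ⊗ₜ[R] ((b.repr v j) • b j) -
            (⟨(x : A) * (b.repr v j), hI x x.2 _⟩ : ↥I) ⊗ₜ[R] (b j) ∈ S := by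
          have h := S.smul_mem (-1 : R) this
          refine cast (congrArg (· ∈ S) ?_) h
          exact (neg_one_smul R _).trans (neg_sub _ _)
        exact h2
    | add z w hz hw =>
        obtain ⟨f, hf⟩ := hz
        obtain ⟨g, hg⟩ := hw
        refine ⟨f + g, ?_⟩
        rw [Finsupp.sum_add_index' (by intro a; exact TensorProduct.zero_tmul _ _)
          (by intro a b₁ b₂; exact TensorProduct.add_tmul _ _ _)]
        have : z + w - (f.sum (fun j x => x ⊗ₜ[R] b j) + g.sum (fun j x => x ⊗ₜ[R] b j))
            = (z - f.sum (fun j x => x ⊗ₜ[R] b j)) + (w - g.sum (fun j x => x ⊗ₜ[R] b j)) := by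
          abel
        rw [this]
        exact add_mem hf hg
  have hSker : S ≤ LinearMap.ker (mulTensor I) := by
    rw [hS, Submodule.span_le]
    rintro w ⟨x, a, v, h, rfl⟩
    simp only [SetLike.mem_coe, LinearMap.mem_ker, map_sub, mulTensor_tmul]
    rw [mul_smul]
    simp
  obtain ⟨f, hf⟩ := key z
  have hz2 : mulTensor I (f.sum fun j x => x ⊗ₜ[R] b j) = 0 := by
    have := hSker hf
    rw [LinearMap.mem_ker, map_sub, hz, zero_sub, neg_eq_zero] at this
    exact this
  have hsum : mulTensor I (f.sum fun j x => x ⊗ₜ[R] b j)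
      = ∑ j ∈ f.support, ((f j : A)) • b j := by
    rw [Finsupp.sum, map_sum]
    exact Finset.sum_congr rfl fun j _ => rfl
  have hind := linearIndependent_iff'.mp b.linearIndependent f.support
    (fun j => (f j : A)) (by rw [← hsum, hz2])
  have hf0 : f = 0 := by
    ext j
    show ((f j : A)) = ((0 : ι →₀ ↥I) j : A)
    rw [Finsupp.coe_zero, Pi.zero_apply, ZeroMemClass.coe_zero]
    by_cases hj : j ∈ f.support
    · exact hind j hj
    · rw [Finsupp.notMem_support_iff.mp hj, ZeroMemClass.coe_zero]
  rw [hf0] at hf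
  simp only [Finsupp.sum_zero_index] at hf
  exact cast (congrArg (· ∈ S) (sub_zero z)) hf


section ResSec
variable {A : Type*} [Ring A]

/-- The quotient of a (possibly noncommutative) ring by a left ideal that is closed under
right multiplication and contains all commutators, packaged as a commutative ring. -/
def Res (m : Ideal A) (_hr : ∀ x ∈ m, ∀ a : A, x * a ∈ m)
    (_hc : ∀ a b : A, a * b - b * a ∈ m) : Type _ := A ⧸ m

namespace Res

variable {m : Ideal A} {hr : ∀ x ∈ m, ∀ a : A, x * a ∈ m}
  {hc : ∀ a b : A, a * b - b * a ∈ m}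

instance : AddCommGroup (Res m hr hc) := inferInstanceAs (AddCommGroup (A ⧸ m))

def mk (a : A) : Res m hr hc := Submodule.Quotient.mk a

theorem mk_surjective : Function.Surjective (mk (m := m) (hr := hr) (hc := hc)) :=
  Submodule.Quotient.mk_surjective m

theorem mk_add (a b : A) : (mk (a + b) : Res m hr hc) = mk a + mk b :=
  Submodule.Quotient.mk_add m

theorem mk_eq_mk {a b : A} : (mk a : Res m hr hc) = mk b ↔ a - b ∈ m :=
  Submodule.Quotient.eq m

theorem mk_zero : (mk 0 : Res m hr hc) = 0 := rfl

theorem mk_eq_zero {a : A} : (mk a : Res m hr hc) = 0 ↔ a ∈ m :=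
  Submodule.Quotient.mk_eq_zero m

protected def mul : Res m hr hc → Res m hr hc → Res m hr hc :=
  Quotient.map₂' (· * ·) fun a₁ b₁ h₁ a₂ b₂ h₂ => by
    rw [Submodule.quotientRel_def] at h₁ h₂ ⊢
    have : a₁ * a₂ - b₁ * b₂ = a₁ * (a₂ - b₂) + (a₁ - b₁) * b₂ := by rw [mul_sub, sub_mul]; abel
    rw [this]
    exact add_mem (Ideal.mul_mem_left m _ h₂) (hr _ h₁ b₂)

noncomputable instance : CommRing (Res m hr hc) :=
  { (inferInstance : AddCommGroup (Res m hr hc)) with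
    mul := Res.mul
    one := mk 1
    mul_assoc := fun a b c => Quotient.inductionOn₃' a b c fun a b c =>
      congrArg mk (mul_assoc a b c)
    one_mul := fun a => Quotient.inductionOn' a fun a => congrArg mk (one_mul a)
    mul_one := fun a => Quotient.inductionOn' a fun a => congrArg mk (mul_one a)
    left_distrib := fun a b c => Quotient.inductionOn₃' a b c fun a b c =>
      congrArg mk (left_distrib a b c)
    right_distrib := fun a b c => Quotient.inductionOn₃' a b c fun a b c =>
      congrArg mk (right_distrib a b c)
    zero_mul := fun a => Quotient.inductionOn' a fun a => congrArg mk (zero_mul a)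
    mul_zero := fun a => Quotient.inductionOn' a fun a => congrArg mk (mul_zero a)
    mul_comm := fun a b => Quotient.inductionOn₂' a b fun a b =>
      mk_eq_mk.2 (hc a b) }

theorem mk_mul (a b : A) : (mk (a * b) : Res m hr hc) = mk a * mk b := rfl

theorem mk_one : (mk 1 : Res m hr hc) = 1 := rfl

end Res
end ResSec

section QModSec

variable {A : Type*} [Ring A] {m : Ideal A} {hr : ∀ x ∈ m, ∀ a : A, x * a ∈ m}
  {hc : ∀ a b : A, a * b - b * a ∈ m}

/-- The quotient of an `A`-module by `m • ⊤`, as a module over `Res m hr hc`. -/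
def QMod (m : Ideal A) (_hr : ∀ x ∈ m, ∀ a : A, x * a ∈ m)
    (_hc : ∀ a b : A, a * b - b * a ∈ m) (M : Type*) [AddCommGroup M] [Module A M] :
    Type _ :=
  M ⧸ (m • ⊤ : Submodule A M)

namespace QMod
variable (M : Type*) [AddCommGroup M] [Module A M]

instance : AddCommGroup (QMod m hr hc M) :=
  inferInstanceAs (AddCommGroup (M ⧸ (m • ⊤ : Submodule A M)))

variable {M}

def mk (v : M) : QMod m hr hc M := Submodule.Quotient.mk v

theorem mk_surjective : Function.Surjective (mk (m := m) (hr := hr) (hc := hc) (M := M)) :=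
  Submodule.Quotient.mk_surjective _

theorem mk_add (v w : M) : (mk (v + w) : QMod m hr hc M) = mk v + mk w :=
  Submodule.Quotient.mk_add _

theorem mk_zero : (mk 0 : QMod m hr hc M) = 0 := rfl

theorem mk_eq_zero {v : M} : (mk v : QMod m hr hc M) = 0 ↔ v ∈ (m • ⊤ : Submodule A M) :=
  Submodule.Quotient.mk_eq_zero _

theorem mk_eq_mk {v w : M} : (mk v : QMod m hr hc M) = mk w ↔ v - w ∈ (m • ⊤ : Submodule A M) :=
  Submodule.Quotient.eq _

protected def smul : Res m hr hc → QMod m hr hc M → QMod m hr hc M :=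
  Quotient.map₂' (· • ·) fun a₁ b₁ h₁ v₁ w₁ h₂ => by
    rw [Submodule.quotientRel_def] at h₁ h₂ ⊢
    have : a₁ • v₁ - b₁ • w₁ = a₁ • (v₁ - w₁) + (a₁ - b₁) • w₁ := by
      rw [smul_sub, sub_smul]; abel
    rw [this]
    exact add_mem (Submodule.smul_mem _ _ h₂) (Submodule.smul_mem_smul h₁ trivial)

noncomputable instance : Module (Res m hr hc) (QMod m hr hc M) where
  smul := QMod.smul
  one_smul := fun v => Quotient.inductionOn' v fun v => congrArg mk (one_smul A v)
  mul_smul := fun a b v => Quotient.inductionOn₃' a b v fun a b v =>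
    congrArg mk (mul_smul a b v)
  smul_zero := fun a => Quotient.inductionOn' a fun a => congrArg mk (smul_zero a)
  smul_add := fun a v w => Quotient.inductionOn₃' a v w fun a v w =>
    congrArg mk (smul_add a v w)
  add_smul := fun a b v => Quotient.inductionOn₃' a b v fun a b v =>
    congrArg mk (add_smul a b v)
  zero_smul := fun v => Quotient.inductionOn' v fun v => congrArg mk (zero_smul A v)

theorem mk_smul (a : A) (v : M) :
    (Res.mk a : Res m hr hc) • (mk v : QMod m hr hc M) = mk (a • v) := rfl

section RMod

variable {R : Type*} [CommRing R] [Algebra R A] [Module R M] [IsScalarTower R A M]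

instance : Module R (QMod m hr hc M) :=
  inferInstanceAs (Module R (M ⧸ (m • ⊤ : Submodule A M)))

theorem mk_smul_R (r : R) (v : M) :
    (mk (r • v) : QMod m hr hc M) = r • mk v :=
  Submodule.Quotient.mk_smul _ r v

theorem smul_R (r : R) (y : QMod m hr hc M) :
    r • y = (Res.mk (algebraMap R A r) : Res m hr hc) • y := by
  obtain ⟨v, rfl⟩ := mk_surjective (m := m) (hr := hr) (hc := hc) y
  rw [mk_smul, algebraMap_smul, mk_smul_R]

theorem smul_comm_R (r : R) (c : Res m hr hc) (y : QMod m hr hc M) :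
    c • (r • y) = r • (c • y) := by
  rw [smul_R r y, smul_R r (c • y), ← mul_smul, ← mul_smul, mul_comm]

end RMod

end QMod
end QModSec

theorem nakayama_nilpotent {A V : Type*} [Ring A] [AddCommGroup V] [Module A V]
    (m : Ideal A) (N : ℕ) (hm : m ^ N = ⊥) (P : Submodule A V)
    (h : P ⊔ m • (⊤ : Submodule A V) = ⊤) : P = ⊤ := by
  have key : ∀ n : ℕ, (⊤ : Submodule A V) ≤ P ⊔ (m ^ n) • (⊤ : Submodule A V) := by
    intro n
    induction n with
    | zero =>
        rw [Submodule.pow_zero, Ideal.one_eq_top, Submodule.top_smul]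
        exact le_sup_right
    | succ n ih =>
        refine le_trans ih (sup_le le_sup_left ?_)
        have h1 : (m ^ n) • (⊤ : Submodule A V) = (m ^ n) • (P ⊔ m • ⊤) := by rw [h]
        rw [h1, Submodule.smul_sup]
        refine sup_le (le_trans ?_ le_sup_left) (le_trans ?_ le_sup_right)
        · exact Submodule.smul_le.2 fun r _ v hv => P.smul_mem r hv
        · refine Submodule.smul_le.2 fun r hr v hv => ?_
          refine Submodule.smul_induction_on hv (fun c hc w _ => ?_) (fun v w hv' hw' => ?_)
          · rw [smul_smul]
            refine Submodule.smul_mem_smul ?_ trivial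
            exact (show m ^ (n + 1) = m ^ n * m from rfl) ▸ Submodule.mul_mem_mul hr hc
          · rw [smul_add]; exact add_mem hv' hw'
  have h2 := key N
  rw [hm, Submodule.bot_smul, sup_bot_eq] at h2
  exact le_antisymm le_top h2


set_option maxHeartbeats 1000000 in
theorem stmt2 {R A V : Type*} [Field R] [CharZero R] [Ring A] [Algebra R A]
    [AddCommGroup V] [Module R V] [Module A V] [IsScalarTower R A V]
    [SMulCommClass A R V]
    (𝒜 : ZMod 2 → Submodule R A)
    (hinternal : DirectSum.IsInternal 𝒜)
    (hone : (1 : A) ∈ 𝒜 0)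
    (hmul : ∀ {i j : ZMod 2} {a b : A}, a ∈ 𝒜 i → b ∈ 𝒜 j → a * b ∈ 𝒜 (i + j))
    (hcomm : ∀ {i j : ZMod 2} {a b : A}, a ∈ 𝒜 i → b ∈ 𝒜 j →
      a * b = ((-1 : R) ^ (i.val * j.val)) • (b * a))
    -- `K̄ = K/I_K` is a field:
    (hnontriv : (1 : A) ≠ 0)
    (hfield : ∀ a ∈ 𝒜 0, a ∉ Ideal.span (𝒜 1 : Set A) → IsUnit a)
    -- `I_K` is nilpotent:
    (hnilp : IsNilpotent (Ideal.span (𝒜 1 : Set A)))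
    -- `V` is a `K`-supermodule:
    (ℳ : ZMod 2 → Submodule R V)
    (hVinternal : DirectSum.IsInternal ℳ)
    (hsmul : ∀ {i j : ZMod 2} {a : A} {v : V}, a ∈ 𝒜 i → v ∈ ℳ j → a • v ∈ ℳ (i + j)) :
    (∃ (s : Set V) (_ : Module.Basis s A V), ∀ x : s, ∃ j : ZMod 2, (x : V) ∈ ℳ j) ↔
      IsFlatOver R (A := A) (V := V) := by
  classical
  constructor
  · rintro ⟨s, b, -⟩
    exact flat_of_basis b
  intro hflat
  set m : Ideal A := Ideal.span (𝒜 1 : Set A) with hm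
  -- basic decomposition facts
  have hzm : ∀ i : ZMod 2, i = 0 ∨ i = 1 := by decide
  have hAtop : 𝒜 0 ⊔ 𝒜 1 = ⊤ := by
    rw [← hinternal.submodule_iSup_eq_top]
    apply le_antisymm
    · exact sup_le (le_iSup 𝒜 0) (le_iSup 𝒜 1)
    · exact iSup_le fun i => by
        rcases hzm i with h | h <;> rw [h]
        · exact le_sup_left
        · exact le_sup_right
  have hMtop : ℳ 0 ⊔ ℳ 1 = ⊤ := by
    rw [← hVinternal.submodule_iSup_eq_top]
    apply le_antisymm
    · exact sup_le (le_iSup ℳ 0) (le_iSup ℳ 1)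
    · exact iSup_le fun i => by
        rcases hzm i with h | h <;> rw [h]
        · exact le_sup_left
        · exact le_sup_right
  have decA : ∀ a : A, ∃ a0 ∈ 𝒜 0, ∃ a1 ∈ 𝒜 1, a = a0 + a1 := by
    intro a
    have h1 : a ∈ 𝒜 0 ⊔ 𝒜 1 := by rw [hAtop]; trivial
    obtain ⟨a0, h0, a1, h1', hsum⟩ := Submodule.mem_sup.1 h1
    exact ⟨a0, h0, a1, h1', hsum.symm⟩
  have decV : ∀ v : V, ∃ v0 ∈ ℳ 0, ∃ v1 ∈ ℳ 1, v = v0 + v1 := by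
    intro v
    have h1 : v ∈ ℳ 0 ⊔ ℳ 1 := by rw [hMtop]; trivial
    obtain ⟨v0, h0, v1, h1', hsum⟩ := Submodule.mem_sup.1 h1
    exact ⟨v0, h0, v1, h1', hsum.symm⟩
  have hMdisj : ∀ v : V, v ∈ ℳ 0 → v ∈ ℳ 1 → v = 0 := by
    intro v h0 h1
    have hind := hVinternal.submodule_iSupIndep
    have hle : ℳ 1 ≤ ⨆ (j : ZMod 2) (_ : j ≠ 0), ℳ j :=
      le_iSup₂ (f := fun (j : ZMod 2) (_ : j ≠ (0 : ZMod 2)) => ℳ j) 1 one_ne_zero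
    exact (Submodule.mem_bot R).1 ((hind 0).le_bot ⟨h0, hle h1⟩)
  -- even elements are central
  have hcentral : ∀ a0 ∈ 𝒜 0, ∀ b : A, a0 * b = b * a0 := by
    intro a0 h0 b
    obtain ⟨b0, hb0, b1, hb1, rfl⟩ := decA b
    have e0 : a0 * b0 = b0 * a0 := by
      have h := hcomm h0 hb0
      rwa [show ((0 : ZMod 2).val * (0 : ZMod 2).val) = 0 from rfl, pow_zero, one_smul] at h
    have e1 : a0 * b1 = b1 * a0 := by
      have h := hcomm h0 hb1
      rwa [show ((0 : ZMod 2).val * (1 : ZMod 2).val) = 0 from rfl, pow_zero, one_smul] at h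
    rw [mul_add, add_mul, e0, e1]
  -- m is closed under right multiplication
  have hr : ∀ x ∈ m, ∀ a : A, x * a ∈ m := by
    intro x hx
    refine Submodule.span_induction (p := fun x _ => ∀ a : A, x * a ∈ m)
      ?_ ?_ ?_ ?_ hx
    · intro b hb a
      obtain ⟨a0, h0, a1, h1, rfl⟩ := decA a
      rw [mul_add]
      refine add_mem ?_ ?_
      · rw [← hcentral a0 h0 b]
        exact Ideal.mul_mem_left m a0 (Ideal.subset_span hb)
      · have h := hcomm (show b ∈ 𝒜 1 from hb) h1
        rw [show ((1 : ZMod 2).val * (1 : ZMod 2).val) = 1 from rfl, pow_one,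
          neg_one_smul] at h
        rw [h]
        exact neg_mem (Ideal.mul_mem_left m a1 (Ideal.subset_span hb))
    · intro a; rw [zero_mul]; exact zero_mem m
    · intro x y _ _ hx' hy' a
      rw [add_mul]; exact add_mem (hx' a) (hy' a)
    · intro c x _ hx' a
      rw [smul_eq_mul, mul_assoc]
      exact Ideal.mul_mem_left m c (hx' a)
  -- left multiples stay in powers
  have hleft : ∀ (n : ℕ) (x : A), x ∈ m ^ n → ∀ a : A, a * x ∈ m ^ n := by
    intro n
    induction n with
    | zero => intro x _ a; rw [Submodule.pow_zero, Ideal.one_eq_top]; trivial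
    | succ n ih =>
        intro x hx a
        rw [show m ^ (n + 1) = m ^ n * m from rfl] at hx ⊢
        refine Submodule.mul_induction_on hx (fun y hy c hc => ?_) (fun y z hy hz => ?_)
        · rw [← mul_assoc]
          exact Submodule.mul_mem_mul (ih y hy a) hc
        · rw [mul_add]; exact add_mem hy hz
  -- multiplying by m raises the power
  have hmulpow : ∀ (n : ℕ) (x : A), x ∈ m ^ n → ∀ b ∈ m, b * x ∈ m ^ (n + 1) := by
    intro n
    induction n with
    | zero =>
        intro x _ b hb
        rw [show m ^ (0 + 1) = m ^ 0 * m from rfl, Submodule.pow_zero, Submodule.one_mul]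
        exact hr b hb x
    | succ n ih =>
        intro x hx b hb
        rw [show m ^ (n + 1) = m ^ n * m from rfl] at hx
        rw [show m ^ (n + 1 + 1) = m ^ (n + 1) * m from rfl]
        refine Submodule.mul_induction_on hx (fun y hy c hc => ?_) (fun y z hy hz => ?_)
        · rw [← mul_assoc]
          exact Submodule.mul_mem_mul (ih y hy b hb) hc
        · rw [mul_add]; exact add_mem hy hz
  -- commutators raise the power
  have hcomm_pow : ∀ (n : ℕ) (x : A), x ∈ m ^ n → ∀ a : A, x * a - a * x ∈ m ^ (n + 1) := by
    intro n x hx a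
    obtain ⟨a0, h0, a1, h1, rfl⟩ := decA a
    have hxa0 : x * a0 = a0 * x := (hcentral a0 h0 x).symm
    have hrw : x * (a0 + a1) - (a0 + a1) * x = x * a1 - a1 * x := by
      rw [mul_add, add_mul, hxa0]; abel
    rw [hrw]
    have hm1 : a1 ∈ m := Ideal.subset_span h1
    have t1 : x * a1 ∈ m ^ (n + 1) :=
      (show m ^ (n + 1) = m ^ n * m from rfl) ▸ Submodule.mul_mem_mul hx hm1
    have t2 : a1 * x ∈ m ^ (n + 1) := hmulpow n x hx a1 hm1
    exact sub_mem t1 t2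
  -- powers of m are closed under right multiplication
  have hJr : ∀ (n : ℕ) (x : A), x ∈ m ^ n → ∀ a : A, x * a ∈ m ^ n := by
    intro n x hx a
    have h2 := hcomm_pow n x hx a
    have h3 : x * a = a * x + (x * a - a * x) := by abel
    rw [h3]
    refine add_mem (hleft n x hx a) (Ideal.pow_le_pow_right (Nat.le_succ n) h2)
  -- commutators lie in m
  have hc : ∀ a b : A, a * b - b * a ∈ m := by
    intro a b
    have h := hcomm_pow 0 a (by rw [Submodule.pow_zero, Ideal.one_eq_top]; trivial) b
    rwa [zero_add, Submodule.pow_one] at h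
  -- nilpotency
  obtain ⟨N, hN⟩ := hnilp
  have hNbot : m ^ N = ⊥ := by rwa [Ideal.zero_eq_bot] at hN
  have h1m : (1 : A) ∉ m := by
    intro h1
    have hpow : ∀ n : ℕ, (1 : A) ∈ m ^ n := by
      intro n
      induction n with
      | zero => rw [Submodule.pow_zero, Ideal.one_eq_top]; trivial
      | succ n ih =>
          have h2 := Submodule.mul_mem_mul ih h1
          rw [one_mul] at h2
          exact h2
    have h3 := hpow N
    rw [hNbot] at h3
    exact hnontriv ((Submodule.mem_bot A).1 h3)
  -- m^(n+1) = m * m^n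
  have hm_top : m * (⊤ : Ideal A) = m := by
    apply le_antisymm (Submodule.mul_le.2 fun x hx a _ => hr x hx a)
    intro x hx
    have h2 := Submodule.mul_mem_mul hx (Submodule.mem_top (R := A) (x := (1 : A)))
    rwa [mul_one] at h2
  have hE : ∀ n : ℕ, m ^ (n + 1) = m * m ^ n := by
    intro n
    induction n with
    | zero => rw [zero_add, Submodule.pow_one, Submodule.pow_zero, Ideal.one_eq_top, hm_top]
    | succ n ih =>
        calc m ^ (n + 2) = m ^ (n + 1) * m := rfl
          _ = (m * m ^ n) * m := by rw [ih]
          _ = m * (m ^ n * m) := mul_assoc _ _ _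
          _ = m * m ^ (n + 1) := rfl
  -- the residue field
  have hfieldk : IsField (Res m hr hc) := by
    refine ⟨⟨0, 1, ?_⟩, mul_comm, ?_⟩
    · intro h01
      apply h1m
      have h2 : (Res.mk 1 : Res m hr hc) = Res.mk 0 := by
        rw [Res.mk_zero, Res.mk_one]; exact h01.symm
      have h3 := Res.mk_eq_mk.1 h2
      rwa [sub_zero] at h3
    · intro a ha
      obtain ⟨a', rfl⟩ := Res.mk_surjective a
      obtain ⟨a0, h0, a1, h1, rfl⟩ := decA a'
      have hm1 : a1 ∈ m := Ideal.subset_span h1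
      have hmk : (Res.mk (a0 + a1) : Res m hr hc) = Res.mk a0 :=
        Res.mk_eq_mk.2 (by simpa using hm1)
      have h0m : a0 ∉ m := by
        intro hmem
        exact ha (by rw [hmk]; exact Res.mk_eq_zero.2 hmem)
      obtain ⟨u, hu⟩ := hfield a0 h0 h0m
      refine ⟨Res.mk ↑u⁻¹, ?_⟩
      rw [hmk, ← Res.mk_mul, ← hu, Units.mul_inv, Res.mk_one]
  letI : Field (Res m hr hc) := hfieldk.toField
  -- `V/mV` and its graded pieces
  have hgrmV : ∀ w ∈ (m • ⊤ : Submodule A V),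
      ∃ w0 ∈ ℳ 0, ∃ w1 ∈ ℳ 1, w = w0 + w1 ∧ w0 ∈ (m • ⊤ : Submodule A V) ∧
        w1 ∈ (m • ⊤ : Submodule A V) := by
    intro w hw
    refine Submodule.smul_induction_on hw ?_ ?_
    · intro c hcm v hvt
      clear hvt
      revert v
      refine Submodule.span_induction (p := fun c _ => ∀ v : V, ∃ w0 ∈ ℳ 0, ∃ w1 ∈ ℳ 1,
        c • v = w0 + w1 ∧ w0 ∈ (m • ⊤ : Submodule A V) ∧ w1 ∈ (m • ⊤ : Submodule A V))
        ?_ ?_ ?_ ?_ hcm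
      · intro b hb v
        obtain ⟨v0, h0, v1, h1, rfl⟩ := decV v
        have hbm : b ∈ m := Ideal.subset_span hb
        have m1 : b • v0 ∈ ℳ 1 := by
          have := hsmul (show b ∈ 𝒜 1 from hb) h0; simpa using this
        have m0 : b • v1 ∈ ℳ 0 := by
          have := hsmul (show b ∈ 𝒜 1 from hb) h1
          rwa [show ((1 : ZMod 2) + 1) = 0 by decide] at this
        exact ⟨b • v1, m0, b • v0, m1, by rw [smul_add, add_comm],
          Submodule.smul_mem_smul hbm trivial, Submodule.smul_mem_smul hbm trivial⟩
      · intro v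
        exact ⟨0, zero_mem _, 0, zero_mem _, by rw [zero_smul, add_zero], zero_mem _, zero_mem _⟩
      · intro c c' _ _ ihc ihc' v
        obtain ⟨w0, hw0, w1, hw1, he, hm0, hm1⟩ := ihc v
        obtain ⟨w0', hw0', w1', hw1', he', hm0', hm1'⟩ := ihc' v
        exact ⟨w0 + w0', add_mem hw0 hw0', w1 + w1', add_mem hw1 hw1',
          by rw [add_smul, he, he']; abel, add_mem hm0 hm0', add_mem hm1 hm1'⟩
      · intro a c _ ihc v
        obtain ⟨w0, hw0, w1, hw1, he, hm0, hm1⟩ := ihc v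
        obtain ⟨a0, ha0, a1, ha1, rfl⟩ := decA a
        refine ⟨a0 • w0 + a1 • w1, ?_, a0 • w1 + a1 • w0, ?_, ?_, ?_, ?_⟩
        · refine add_mem ?_ ?_
          · have := hsmul ha0 hw0; simpa using this
          · have := hsmul ha1 hw1
            rwa [show ((1 : ZMod 2) + 1) = 0 by decide] at this
        · refine add_mem ?_ ?_
          · have := hsmul ha0 hw1; simpa using this
          · have := hsmul ha1 hw0; simpa using this
        · rw [smul_eq_mul, mul_smul, he, smul_add, add_smul, add_smul]; abel
        · exact add_mem (Submodule.smul_mem _ _ hm0) (Submodule.smul_mem _ _ hm1)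
        · exact add_mem (Submodule.smul_mem _ _ hm1) (Submodule.smul_mem _ _ hm0)
    · intro x y ihx ihy
      obtain ⟨w0, hw0, w1, hw1, he, hm0, hm1⟩ := ihx
      obtain ⟨w0', hw0', w1', hw1', he', hm0', hm1'⟩ := ihy
      exact ⟨w0 + w0', add_mem hw0 hw0', w1 + w1', add_mem hw1 hw1',
        by rw [he, he']; abel, add_mem hm0 hm0', add_mem hm1 hm1'⟩
  -- the graded pieces of `V/mV`
  let W : ZMod 2 → Submodule (Res m hr hc) (QMod m hr hc V) := fun j =>
    { carrier := QMod.mk '' ((ℳ j : Set V))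
      add_mem' := by
        rintro x y ⟨v, hv, rfl⟩ ⟨w, hw, rfl⟩
        exact ⟨v + w, add_mem hv hw, QMod.mk_add v w⟩
      zero_mem' := ⟨0, zero_mem _, rfl⟩
      smul_mem' := by
        rintro c x ⟨v, hv, rfl⟩
        obtain ⟨a, rfl⟩ := Res.mk_surjective c
        obtain ⟨a0, h0, a1, h1, rfl⟩ := decA a
        refine ⟨a0 • v, by simpa using hsmul h0 hv, ?_⟩
        rw [QMod.mk_smul]
        refine (QMod.mk_eq_mk.2 ?_)
        have : a0 • v - (a0 + a1) • v = -(a1 • v) := by rw [add_smul]; abel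
        rw [this]
        exact neg_mem (Submodule.smul_mem_smul (Ideal.subset_span h1) trivial) }
  have hWmem : ∀ (j : ZMod 2) (x : QMod m hr hc V), x ∈ W j ↔
      ∃ v ∈ ℳ j, QMod.mk v = x := by
    intro j x
    constructor
    · rintro ⟨v, hv, rfl⟩; exact ⟨v, hv, rfl⟩
    · rintro ⟨v, hv, rfl⟩; exact ⟨v, hv, rfl⟩
  have hWdisj : Disjoint (W 0) (W 1) := by
    rw [Submodule.disjoint_def]
    intro x hx0 hx1
    obtain ⟨v0, h0, rfl⟩ := (hWmem 0 x).1 hx0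
    obtain ⟨v1, h1, heq⟩ := (hWmem 1 _).1 hx1
    have hsub : v0 - v1 ∈ (m • ⊤ : Submodule A V) := QMod.mk_eq_mk.1 heq.symm
    obtain ⟨w0, hw0, w1, hw1, heq2, hmm0, hmm1⟩ := hgrmV _ hsub
    have h5 : v0 - w0 = v1 + w1 := by
      rw [sub_eq_iff_eq_add.mp heq2]; abel
    have h6 : v0 - w0 = 0 := hMdisj _ (sub_mem h0 hw0) (h5 ▸ add_mem h1 hw1)
    have h7 : v0 = w0 := by rwa [sub_eq_zero] at h6
    exact QMod.mk_eq_zero.2 (h7 ▸ hmm0)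
  have hWsup : W 0 ⊔ W 1 = ⊤ := by
    rw [eq_top_iff]
    intro x _
    obtain ⟨v, rfl⟩ := QMod.mk_surjective (m := m) (hr := hr) (hc := hc) x
    obtain ⟨v0, h0, v1, h1, rfl⟩ := decV v
    exact Submodule.mem_sup.2 ⟨QMod.mk v0, ⟨v0, h0, rfl⟩, QMod.mk v1, ⟨v1, h1, rfl⟩,
      (QMod.mk_add v0 v1).symm⟩
  have hWint : DirectSum.IsInternal W := by
    rw [DirectSum.isInternal_submodule_iff_iSupIndep_and_iSup_eq_top]
    refine ⟨(iSupIndep_pair (show (0 : ZMod 2) ≠ 1 by decide) hzm).2 hWdisj, ?_⟩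
    have h8 : iSup W = W 0 ⊔ W 1 := by
      apply le_antisymm
      · exact iSup_le fun i => by
          rcases hzm i with h | h <;> rw [h]
          · exact le_sup_left
          · exact le_sup_right
      · exact sup_le (le_iSup W 0) (le_iSup W 1)
    rw [h8, hWsup]
  -- choose a homogeneous basis of `V/mV`
  let bW : ∀ j : ZMod 2, Module.Basis (Module.Basis.ofVectorSpaceIndex (Res m hr hc) ↥(W j))
      (Res m hr hc) ↥(W j) := fun j => Module.Basis.ofVectorSpace _ _
  let bV : Module.Basis ((j : ZMod 2) × Module.Basis.ofVectorSpaceIndex (Res m hr hc) ↥(W j))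
      (Res m hr hc) (QMod m hr hc V) := hWint.collectedBasis bW
  have hbVmem : ∀ t, bV t ∈ W t.1 := fun t => hWint.collectedBasis_mem bW t
  have hlift : ∀ t, ∃ v : V, v ∈ ℳ t.1 ∧ QMod.mk v = bV t := by
    intro t
    obtain ⟨v, hv, he⟩ := (hWmem t.1 _).1 (hbVmem t)
    exact ⟨v, hv, he⟩
  choose vf hvmem hvmk using hlift
  -- the lifted family generates V
  have hmksum : ∀ (s : Finset ((j : ZMod 2) × Module.Basis.ofVectorSpaceIndex (Res m hr hc) ↥(W j)))
      (f : _ → V), (QMod.mk (∑ t ∈ s, f t) : QMod m hr hc V) = ∑ t ∈ s, QMod.mk (f t) := by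
    intro s f
    exact map_sum (Submodule.mkQ _) f s
  have hgen : Submodule.span A (Set.range vf) ⊔ m • (⊤ : Submodule A V) = ⊤ := by
    rw [eq_top_iff]
    intro w _
    have hx := bV.linearCombination_repr (QMod.mk w)
    rw [Finsupp.linearCombination_apply, Finsupp.sum] at hx
    have hchoice : ∀ t, ∃ a : A, (Res.mk a : Res m hr hc) = bV.repr (QMod.mk w) t :=
      fun t => Res.mk_surjective _
    choose af haf using hchoice
    set u : V := ∑ t ∈ (bV.repr (QMod.mk w)).support, af t • vf t with hu
    have humem : u ∈ Submodule.span A (Set.range vf) := by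
      refine Submodule.sum_mem _ fun t _ => ?_
      exact Submodule.smul_mem _ _ (Submodule.subset_span ⟨t, rfl⟩)
    have hmku : (QMod.mk u : QMod m hr hc V) = QMod.mk w := by
      rw [hu, hmksum]
      calc ∑ t ∈ (bV.repr (QMod.mk w)).support, (QMod.mk (af t • vf t) : QMod m hr hc V)
          = ∑ t ∈ (bV.repr (QMod.mk w)).support, bV.repr (QMod.mk w) t • bV t := by
            refine Finset.sum_congr rfl fun t _ => ?_
            rw [← QMod.mk_smul, haf, hvmk]
        _ = QMod.mk w := hx
    have hwu : w - u ∈ (m • ⊤ : Submodule A V) := QMod.mk_eq_mk.1 hmku.symm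
    have : w = u + (w - u) := by abel
    rw [this]
    exact Submodule.add_mem_sup humem hwu
  have hspan : Submodule.span A (Set.range vf) = ⊤ :=
    nakayama_nilpotent m N hNbot _ hgen
  -- auxiliary facts about `m^n / m^(n+1)`
  have hBin : ∀ (n : ℕ) (y : A), y ∈ m ^ (n + 1) → ∀ (hyn : y ∈ m ^ n),
      (⟨y, hyn⟩ : ↥(m ^ n)) ∈ (m • ⊤ : Submodule A ↥(m ^ n)) := by
    intro n y hy
    rw [hE n] at hy
    have H : y ∈ m ^ n ∧ ∀ (hyn : y ∈ m ^ n),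
        (⟨y, hyn⟩ : ↥(m ^ n)) ∈ (m • ⊤ : Submodule A ↥(m ^ n)) := by
      refine Submodule.mul_induction_on hy (fun c hcm w hw => ?_) (fun a b ha hb => ?_)
      · refine ⟨Ideal.pow_le_pow_right (Nat.le_succ n) (hmulpow n w hw c hcm), fun hyn => ?_⟩
        have he : (⟨c * w, hyn⟩ : ↥(m ^ n)) = c • (⟨w, hw⟩ : ↥(m ^ n)) :=
          Subtype.ext (by rw [SetLike.val_smul, smul_eq_mul])
        rw [he]
        exact Submodule.smul_mem_smul hcm trivial
      · obtain ⟨ha1, ha2⟩ := ha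
        obtain ⟨hb1, hb2⟩ := hb
        refine ⟨add_mem ha1 hb1, fun hyn => ?_⟩
        have he : (⟨a + b, hyn⟩ : ↥(m ^ n)) = ⟨a, ha1⟩ + ⟨b, hb1⟩ := Subtype.ext rfl
        rw [he]
        exact add_mem (ha2 ha1) (hb2 hb1)
    exact H.2
  have hJval : ∀ (n : ℕ) (y : ↥(m ^ n)), y ∈ (m • ⊤ : Submodule A ↥(m ^ n)) →
      (y : A) ∈ m ^ (n + 1) := by
    intro n y hy
    refine Submodule.smul_induction_on hy (fun c hcm w _ => ?_) (fun a b ha hb => ?_)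
    · rw [SetLike.val_smul, smul_eq_mul]
      exact hmulpow n w.1 w.2 c hcm
    · rw [Submodule.coe_add]
      exact add_mem ha hb
  -- linear independence of the lifted family
  have hli : LinearIndependent A vf := by
    rw [linearIndependent_iff']
    intro s g hsum
    suffices hsuff : ∀ n : ℕ, ∀ t ∈ s, g t ∈ m ^ n by
      intro t ht
      have h10 := hsuff N t ht
      rw [hNbot] at h10
      exact (Submodule.mem_bot A).1 h10
    intro n
    induction n with
    | zero => intro t _; rw [Submodule.pow_zero, Ideal.one_eq_top]; trivial
    | succ n ih =>
        intro t₀ ht₀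
        set I : Submodule R A := (m ^ n).restrictScalars R with hIdef
        have hIr : ∀ x ∈ I, ∀ a : A, x * a ∈ I := fun x hx a => hJr n x hx a
        set gI : _ → ↥I := fun t => if h : t ∈ s then (⟨g t, ih t h⟩ : ↥I) else 0 with hgI
        set z : ↥I ⊗[R] V := ∑ t ∈ s, gI t ⊗ₜ[R] vf t with hzdef
        have hmt : mulTensor I z = 0 := by
          rw [hzdef, map_sum]
          have he : ∀ t ∈ s, mulTensor I (gI t ⊗ₜ[R] vf t) = g t • vf t := by
            intro t ht
            rw [mulTensor_tmul, hgI]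
            simp only [dif_pos ht]
          rw [Finset.sum_congr rfl he, hsum]
        have hzS := hflat I hIr z hmt
        -- the evaluation map φ into m^n / m^(n+1)
        obtain ⟨ρ, hρ⟩ : ∃ ρ : ↥I →ₗ[R] QMod m hr hc ↥(m ^ n),
            ∀ x : ↥I, ρ x = QMod.mk (⟨x.1, x.2⟩ : ↥(m ^ n)) := by
          refine ⟨{ toFun := fun x => QMod.mk (⟨x.1, x.2⟩ : ↥(m ^ n))
                    map_add' := ?_, map_smul' := ?_ }, fun x => rfl⟩
          · intro x y
            have he : (⟨(x + y).1, (x + y).2⟩ : ↥(m ^ n)) = ⟨x.1, x.2⟩ + ⟨y.1, y.2⟩ :=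
              Subtype.ext rfl
            rw [he, QMod.mk_add]
          · intro r x
            have he : (⟨(r • x).1, (r • x).2⟩ : ↥(m ^ n)) =
                r • (⟨x.1, x.2⟩ : ↥(m ^ n)) := Subtype.ext rfl
            rw [he]
            exact QMod.mk_smul_R r (⟨x.1, x.2⟩ : ↥(m ^ n))
        set coord : QMod m hr hc V →ₗ[Res m hr hc] Res m hr hc := bV.coord t₀ with hcoord
        obtain ⟨φ, hφtmul⟩ : ∃ φ : (↥I ⊗[R] V) →ₗ[R] QMod m hr hc ↥(m ^ n),
            ∀ (x : ↥I) (v : V), φ (x ⊗ₜ[R] v) = coord (QMod.mk v) • ρ x := by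
          refine ⟨TensorProduct.lift (LinearMap.mk₂ R
            (fun (x : ↥I) (v : V) => coord (QMod.mk v) • ρ x)
            (fun x y v => by rw [map_add, smul_add])
            (fun r x v => by
              rw [map_smul]
              exact QMod.smul_comm_R r (coord (QMod.mk v)) (ρ x))
            (fun x v w => by rw [QMod.mk_add, map_add, add_smul])
            (fun r x v => by
              rw [QMod.mk_smul_R r v, QMod.smul_R r (QMod.mk v), map_smul,
                smul_eq_mul, mul_smul, ← QMod.smul_R])), fun x v => ?_⟩
          rw [TensorProduct.lift.tmul, LinearMap.mk₂_apply]
        have hker : Submodule.span R {w : ↥I ⊗[R] V |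
            ∃ (x : ↥I) (a : A) (v : V) (h : (x : A) * a ∈ I),
              w = (⟨(x : A) * a, h⟩ : ↥I) ⊗ₜ[R] v - x ⊗ₜ[R] (a • v)} ≤
            LinearMap.ker φ := by
          rw [Submodule.span_le]
          rintro w ⟨x, a, v, hmem, rfl⟩
          simp only [SetLike.mem_coe, LinearMap.mem_ker, map_sub]
          rw [hφtmul, hφtmul]
          have hsubmem : (x : A) * a - a * (x : A) ∈ m ^ n :=
            Ideal.pow_le_pow_right (Nat.le_succ n) (hcomm_pow n (x : A) x.2 a)
          rw [hρ, hρ]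
          dsimp only
          have hsplit : (⟨(x : A) * a, hmem⟩ : ↥(m ^ n)) =
              a • (⟨(x : A), x.2⟩ : ↥(m ^ n)) + ⟨(x : A) * a - a * (x : A), hsubmem⟩ := by
            apply Subtype.ext
            rw [Submodule.coe_add, SetLike.val_smul, smul_eq_mul]
            symm
            rw [add_comm]
            exact sub_add_cancel _ _
          rw [hsplit, QMod.mk_add]
          have hz0 : (QMod.mk (⟨(x : A) * a - a * (x : A), hsubmem⟩ : ↥(m ^ n)) :
              QMod m hr hc ↥(m ^ n)) = 0 :=
            QMod.mk_eq_zero.2 (hBin n _ (hcomm_pow n (x : A) x.2 a) hsubmem)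
          rw [hz0, add_zero]
          have hmkav : (QMod.mk (a • v) : QMod m hr hc V) = Res.mk a • QMod.mk v :=
            (QMod.mk_smul a v).symm
          rw [show (QMod.mk (a • (⟨(x : A), x.2⟩ : ↥(m ^ n))) : QMod m hr hc ↥(m ^ n)) =
              Res.mk a • QMod.mk (⟨(x : A), x.2⟩ : ↥(m ^ n)) from (QMod.mk_smul _ _).symm]
          rw [hmkav, map_smul, smul_eq_mul, ← mul_smul,
            mul_comm (coord (QMod.mk v)) (Res.mk a), sub_self]
        have hφz0 : φ z = 0 := LinearMap.mem_ker.1 (hker hzS)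
        have hφzval : φ z = ρ (gI t₀) := by
          rw [hzdef, map_sum]
          calc ∑ t ∈ s, φ (gI t ⊗ₜ[R] vf t)
              = ∑ t ∈ s, (bV.repr (bV t)) t₀ • ρ (gI t) := by
                refine Finset.sum_congr rfl fun t _ => ?_
                rw [hφtmul, hvmk t]
                rw [show coord (bV t) = (bV.repr (bV t)) t₀ from bV.coord_apply t₀ (bV t)]
            _ = ρ (gI t₀) := by
                rw [Finset.sum_eq_single_of_mem t₀ ht₀ ?_]
                · rw [Module.Basis.repr_self, Finsupp.single_eq_same, one_smul]
                · intro t _ hne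
                  rw [Module.Basis.repr_self, Finsupp.single_eq_of_ne' hne, zero_smul]
        have hval0 : (QMod.mk (⟨(gI t₀).1, (gI t₀).2⟩ : ↥(m ^ n)) :
            QMod m hr hc ↥(m ^ n)) = 0 := by
          rw [← hρ, ← hφzval]
          exact hφz0
        have hmem2 := hJval n ⟨(gI t₀).1, (gI t₀).2⟩ (QMod.mk_eq_zero.1 hval0)
        have hval : ((gI t₀ : A)) = g t₀ := by rw [hgI]; simp only [dif_pos ht₀]
        rw [hval] at hmem2
        exact hmem2
  -- conclusion
  let bA : Module.Basis _ A V := Module.Basis.mk hli (by rw [hspan])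
  refine ⟨Set.range ⇑bA, bA.reindexRange, ?_⟩
  rintro ⟨x, t, ht⟩
  refine ⟨t.1, ?_⟩
  have h9 : bA t = vf t := congrFun (Module.Basis.coe_mk hli _) t
  show x ∈ ℳ t.1
  rw [← ht, h9]
  exact hvmem t
end

section
/- Let W be a purely odd finite-dimensional vector space over a field R of characteristic zero with dim W = d ≥ 3, let L = ∧(W) be the exterior algebra regarded as a superalgebra, and let K = ∧^0(W) ⊕ ∧^d(W) ⊆ L. Then K is a sub-superalgebra, both K and L are SUSY fields, and L is not flat as a K-module. -/
open scoped TensorProduct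

/-- Helper instance (the self-module structure of the exterior algebra), to guide
typeclass resolution. -/
instance instModSelfExt {R W : Type*} [CommRing R] [AddCommGroup W] [Module R W] :
    Module (ExteriorAlgebra R W) (ExteriorAlgebra R W) :=
  Semiring.toModule

section Aux

open ExteriorAlgebra

variable {R W : Type*} [Field R] [AddCommGroup W] [Module R W] [FiniteDimensional R W]

theorem ExtAux.topvanish (n : ℕ) (h : Module.finrank R W < n) :
    (LinearMap.range (ι R (M := W)) ^ n : Submodule R (ExteriorAlgebra R W)) = ⊥ := by
  have : (⋀[R]^n W : Submodule R (ExteriorAlgebra R W)) = ⊥ := by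
    rw [← ιMulti_span_fixedDegree, Submodule.span_eq_bot]
    rintro x ⟨v, rfl⟩
    apply AlternatingMap.map_linearDependent
    intro hli
    exact absurd (hli.fintype_card_le_finrank.trans_lt (by simpa using h)) (by simp)
  exact this

theorem ExtAux.htop :
    (⨆ n : ℕ, (LinearMap.range (ι R (M := W)) ^ n : Submodule R (ExteriorAlgebra R W))) = ⊤ :=
  (DirectSum.Decomposition.isInternal (fun i : ℕ => ⋀[R]^i W)).submodule_iSup_eq_top

theorem ExtAux.hdisj (a b : ℕ) (hab : a ≠ b) :
    Disjoint (LinearMap.range (ι R (M := W)) ^ a : Submodule R (ExteriorAlgebra R W))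
      (LinearMap.range (ι R (M := W)) ^ b) := by
  have h := (DirectSum.Decomposition.isInternal
    (fun i : ℕ => ⋀[R]^i W)).submodule_iSupIndep
  exact h.pairwiseDisjoint hab

theorem ExtAux.topnonvanish (d : ℕ) (hdim : Module.finrank R W = d) :
    ∃ ω : ExteriorAlgebra R W,
      ω ∈ (LinearMap.range (ι R (M := W)) ^ d : Submodule R (ExteriorAlgebra R W)) ∧ ω ≠ 0 := by
  have b : Module.Basis (Fin d) R W := Module.finBasisOfFinrankEq R W hdim
  refine ⟨ιMulti R d (fun i => b i), ιMulti_range R d ⟨_, rfl⟩, ?_⟩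
  intro h0
  have := liftAlternating_apply_ιMulti (R := R) (M := W) (N := R)
    (Pi.single d b.det) (fun i => b i)
  rw [h0] at this
  simp [b.det_self] at this

theorem ExtAux.Jker : ∀ x ∈ Ideal.span (Set.range (ι R (M := W))),
    algebraMapInv (M := W) x = 0 := by
  intro x hx
  induction hx using Submodule.span_induction with
  | mem x hx =>
    obtain ⟨m, rfl⟩ := hx
    simp [algebraMapInv, lift_ι_apply]
  | zero => simp
  | add x y _ _ hx hy => rw [map_add, hx, hy, add_zero]
  | smul a x _ hx => rw [smul_eq_mul, map_mul, hx, mul_zero]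

theorem ExtAux.powJ (n : ℕ) :
    ((LinearMap.range (ι R (M := W)) ^ (n + 1) : Submodule R (ExteriorAlgebra R W)) :
        Set (ExteriorAlgebra R W)) ⊆
      (Ideal.span (Set.range (ι R (M := W))) : Set (ExteriorAlgebra R W)) := by
  intro x hx
  have : (LinearMap.range (ι R (M := W)) ^ (n + 1) : Submodule R (ExteriorAlgebra R W)) ≤
      (Ideal.span (Set.range (ι R (M := W)))).restrictScalars R := by
    rw [pow_succ]
    apply Submodule.mul_le.mpr
    intro a ha b hb
    have hbJ : b ∈ Ideal.span (Set.range (ι R (M := W))) := Ideal.subset_span hb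
    simpa using Ideal.mul_mem_left _ a hbJ
  exact this hx

theorem ExtAux.nu_mem (a : ExteriorAlgebra R W) :
    a - algebraMap R _ (algebraMapInv a) ∈ Ideal.span (Set.range (ι R (M := W))) := by
  let ν : ExteriorAlgebra R W →ₗ[R] ExteriorAlgebra R W :=
    LinearMap.id -
      (Algebra.linearMap R (ExteriorAlgebra R W)).comp (algebraMapInv (M := W)).toLinearMap
  have key : ∀ n : ℕ,
      ∀ x ∈ (LinearMap.range (ι R (M := W)) ^ n : Submodule R (ExteriorAlgebra R W)),
      ν x ∈ Ideal.span (Set.range (ι R (M := W))) := by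
    intro n x hx
    match n with
    | 0 =>
      rw [pow_zero] at hx
      obtain ⟨r, rfl⟩ := Submodule.mem_one.mp hx
      simp [ν, algebraMap_leftInverse (M := W) r]
    | (n+1) =>
      have hxJ : x ∈ Ideal.span (Set.range (ι R (M := W))) := ExtAux.powJ n hx
      have : (algebraMapInv (M := W)) x = 0 := ExtAux.Jker x hxJ
      simpa [ν, this] using hxJ
  have ha : a ∈ (⊤ : Submodule R (ExteriorAlgebra R W)) := trivial
  rw [← ExtAux.htop] at ha
  have : ν a ∈ Ideal.span (Set.range (ι R (M := W))) := by
    refine Submodule.iSup_induction _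
      (motive := fun y => ν y ∈ Ideal.span (Set.range (ι R (M := W)))) ha key ?_ ?_
    · simpa using (Ideal.zero_mem (Ideal.span (Set.range (ι R (M := W)))))
    · intro x y hx hy
      rw [map_add]; exact Ideal.add_mem _ hx hy
  simpa [ν] using this

theorem ExtAux.Jnilp (d : ℕ) (hdim : Module.finrank R W = d) :
    ∀ j ∈ Ideal.span (Set.range (ι R (M := W))), j ^ (d + 1) = 0 := by
  intro j hj
  set Gpos : Submodule R (ExteriorAlgebra R W) :=
    ⨆ n : ℕ, LinearMap.range (ι R (M := W)) ^ (n + 1) with hGpos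
  have hJle : ((Ideal.span (Set.range (ι R (M := W)))) :
      Set (ExteriorAlgebra R W)) ⊆ (Gpos : Set (ExteriorAlgebra R W)) := by
    intro x hx
    induction hx using Submodule.span_induction with
    | mem x hx =>
      exact Submodule.mem_iSup_of_mem 0 (by simpa [pow_one] using hx)
    | zero => exact Gpos.zero_mem
    | add x y _ _ hx hy => exact Gpos.add_mem hx hy
    | smul a x _ hx =>
      rw [smul_eq_mul]
      have ha : a ∈ (⊤ : Submodule R (ExteriorAlgebra R W)) := trivial
      rw [← ExtAux.htop] at ha
      have : (⨆ n : ℕ,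
          (LinearMap.range (ι R (M := W)) ^ n : Submodule R (ExteriorAlgebra R W))) * Gpos ≤
          Gpos := by
        rw [Submodule.iSup_mul]
        refine iSup_le fun m => ?_
        rw [hGpos, Submodule.mul_iSup]
        refine iSup_le fun n => ?_
        rw [← pow_add]
        exact le_iSup_of_le (m + n) (by rw [add_assoc])
      exact this (Submodule.mul_mem_mul ha hx)
  have hGpow : ∀ k : ℕ, (Gpos ^ k : Submodule R (ExteriorAlgebra R W)) ≤
      ⨆ n : ℕ, LinearMap.range (ι R (M := W)) ^ (n + k) := by
    intro k
    induction k with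
    | zero =>
      rw [pow_zero]
      exact le_iSup_of_le 0 le_rfl
    | succ k ih =>
      rw [pow_succ]
      calc Gpos ^ k * Gpos
          ≤ (⨆ n : ℕ, (LinearMap.range (ι R (M := W)) ^ (n + k) :
              Submodule R (ExteriorAlgebra R W))) * Gpos := mul_le_mul_left ih _
        _ ≤ ⨆ n : ℕ, LinearMap.range (ι R (M := W)) ^ (n + (k + 1)) := by
            rw [Submodule.iSup_mul]
            refine iSup_le fun m => ?_
            rw [hGpos, Submodule.mul_iSup]
            refine iSup_le fun n => ?_
            rw [← pow_add]
            exact le_iSup_of_le (m + n) (le_of_eq (by ring_nf))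
  have hbot : (Gpos ^ (d + 1) : Submodule R (ExteriorAlgebra R W)) = ⊥ := by
    refine le_antisymm ((hGpow (d + 1)).trans (iSup_le fun n => ?_)) bot_le
    rw [ExtAux.topvanish (n + (d + 1)) (by omega)]
  have : j ^ (d + 1) ∈ (Gpos ^ (d + 1) : Submodule R (ExteriorAlgebra R W)) :=
    Submodule.pow_mem_pow _ (hJle hj) (d + 1)
  rw [hbot] at this
  simpa using this

end Aux

set_option maxHeartbeats 4000000 in
set_option synthInstance.maxHeartbeats 400000 in
theorem stmt3 {R W : Type*} [Field R] [CharZero R]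
    [AddCommGroup W] [Module R W] [FiniteDimensional R W]
    (d : ℕ) (hd : 3 ≤ d) (hdim : Module.finrank R W = d) :
    ∀ (K : Subalgebra R (ExteriorAlgebra R W)),
      K = Algebra.adjoin R
        ((LinearMap.range (ExteriorAlgebra.ι R (M := W)) ^ d :
          Submodule R (ExteriorAlgebra R W)) : Set (ExteriorAlgebra R W)) →
      -- `K` is the sub-superalgebra `∧⁰(W) ⊕ ∧ᵈ(W)`:
      (Subalgebra.toSubmodule K =
        (1 : Submodule R (ExteriorAlgebra R W)) ⊔
          LinearMap.range (ExteriorAlgebra.ι R (M := W)) ^ d) ∧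
      -- `L` is a SUSY field:
      IsNoetherianRing (ExteriorAlgebra R W) ∧
      ((1 : ExteriorAlgebra R W) ∉
          Ideal.span (Set.range (ExteriorAlgebra.ι R (M := W)))) ∧
      (∀ a : ExteriorAlgebra R W,
        a ∉ Ideal.span (Set.range (ExteriorAlgebra.ι R (M := W))) → IsUnit a) ∧
      -- `K` is a SUSY field:
      IsNoetherianRing K ∧
      ((1 : K) ∉ Ideal.span {x : K |
          (x : ExteriorAlgebra R W) ∈
            (LinearMap.range (ExteriorAlgebra.ι R (M := W)) ^ d :
              Submodule R (ExteriorAlgebra R W))}) ∧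
      (∀ a : K, a ∉ Ideal.span {x : K |
          (x : ExteriorAlgebra R W) ∈
            (LinearMap.range (ExteriorAlgebra.ι R (M := W)) ^ d :
              Submodule R (ExteriorAlgebra R W))} → IsUnit a) ∧
      -- `L` is not flat as a `K`-module:
      ¬ IsFlatOver R (A := ↥K) (V := ExteriorAlgebra R W) := by
  intro K hKdef
  set P : Submodule R (ExteriorAlgebra R W) :=
    LinearMap.range (ExteriorAlgebra.ι R (M := W)) ^ d with hP
  -- basic multiplication facts
  have hPP : ∀ x ∈ P, ∀ y ∈ P, x * y = 0 := by
    intro x hx y hy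
    have h1 : x * y ∈ P * P := Submodule.mul_mem_mul hx hy
    rw [hP, ← pow_add, ExtAux.topvanish (d + d) (by omega)] at h1
    simpa using h1
  have hPtop : ∀ x ∈ P, ∀ v : ExteriorAlgebra R W, x * v ∈ P := by
    intro x hx v
    have hv : v ∈ (⊤ : Submodule R (ExteriorAlgebra R W)) := trivial
    rw [← ExtAux.htop] at hv
    have hle : P * (⨆ n : ℕ, (LinearMap.range (ExteriorAlgebra.ι R (M := W)) ^ n :
        Submodule R (ExteriorAlgebra R W))) ≤ P := by
      rw [Submodule.mul_iSup]
      refine iSup_le fun n => ?_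
      rw [hP, ← pow_add]
      match n with
      | 0 => exact le_rfl
      | (n+1) => rw [ExtAux.topvanish (d + (n + 1)) (by omega)]; exact bot_le
    exact hle (Submodule.mul_mem_mul hx hv)
  -- part 1
  have part1 : Subalgebra.toSubmodule K =
      (1 : Submodule R (ExteriorAlgebra R W)) ⊔ P := by
    subst hKdef
    have h1 : (1 : ExteriorAlgebra R W) ∈
        ((1 : Submodule R (ExteriorAlgebra R W)) ⊔ P) :=
      Submodule.mem_sup_left (Submodule.one_le.mp le_rfl)
    have hmul : ∀ x y : ExteriorAlgebra R W,
        x ∈ ((1 : Submodule R (ExteriorAlgebra R W)) ⊔ P) →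
        y ∈ ((1 : Submodule R (ExteriorAlgebra R W)) ⊔ P) →
        x * y ∈ ((1 : Submodule R (ExteriorAlgebra R W)) ⊔ P) := by
      intro x y hx hy
      obtain ⟨x1, hx1, p, hp, rfl⟩ := Submodule.mem_sup.mp hx
      obtain ⟨y1, hy1, q, hq, rfl⟩ := Submodule.mem_sup.mp hy
      obtain ⟨r, rfl⟩ := Submodule.mem_one.mp hx1
      obtain ⟨s, rfl⟩ := Submodule.mem_one.mp hy1
      have heq : (algebraMap R _ r + p) * (algebraMap R _ s + q) =
          algebraMap R _ (r * s) + (r • q + s • p + p * q) := by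
        rw [map_mul]
        simp only [mul_add, add_mul, Algebra.smul_def, ← Algebra.commutes s p]
        abel
      rw [heq, hPP p hp q hq, add_zero]
      exact add_mem (Submodule.mem_sup_left (Submodule.mem_one.mpr ⟨r * s, rfl⟩))
        (Submodule.mem_sup_right (add_mem (Submodule.smul_mem _ _ hq)
          (Submodule.smul_mem _ _ hp)))
    set S : Subalgebra R (ExteriorAlgebra R W) := Submodule.toSubalgebra _ h1 hmul with hS
    have e1 : Algebra.adjoin R (P : Set (ExteriorAlgebra R W)) ≤ S :=
      Algebra.adjoin_le fun x hx => Submodule.mem_sup_right hx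
    have e2 : S ≤ Algebra.adjoin R (P : Set (ExteriorAlgebra R W)) := by
      intro x hx
      obtain ⟨x1, hx1, p, hp, rfl⟩ := Submodule.mem_sup.mp hx
      obtain ⟨r, rfl⟩ := Submodule.mem_one.mp hx1
      exact add_mem (Subalgebra.algebraMap_mem _ r) (Algebra.subset_adjoin hp)
    have : Algebra.adjoin R (P : Set (ExteriorAlgebra R W)) = S := le_antisymm e1 e2
    rw [this]
    rfl
  -- Noetherian for L
  have hfgW : (⊤ : Submodule R W).FG := IsNoetherian.noetherian ⊤
  have hP1fg : (LinearMap.range (ExteriorAlgebra.ι R (M := W)) :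
      Submodule R (ExteriorAlgebra R W)).FG := by
    rw [LinearMap.range_eq_map]
    exact hfgW.map _
  have hLfg : (⊤ : Submodule R (ExteriorAlgebra R W)).FG := by
    have htopeq : (⊤ : Submodule R (ExteriorAlgebra R W)) =
        (Finset.range (d + 1)).sup
          (fun n => LinearMap.range (ExteriorAlgebra.ι R (M := W)) ^ n) := by
      refine le_antisymm ?_ le_top
      rw [← ExtAux.htop]
      refine iSup_le fun n => ?_
      by_cases hn : n ≤ d
      · exact Finset.le_sup (Finset.mem_range.mpr (by omega))
      · rw [ExtAux.topvanish n (by omega)]; exact bot_le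
    rw [htopeq]
    exact Submodule.fg_finset_sup _ _ fun n _ => hP1fg.pow n
  have hLfin : Module.Finite R (ExteriorAlgebra R W) := Module.finite_def.mpr hLfg
  have hLnoeth : IsNoetherianRing (ExteriorAlgebra R W) := by
    have h1 : IsNoetherian R (ExteriorAlgebra R W) := by infer_instance
    have h2 : IsNoetherian (ExteriorAlgebra R W) (ExteriorAlgebra R W) :=
      isNoetherian_of_tower R h1
    exact isNoetherianRing_iff.mpr h2
  -- 1 ∉ J
  have hone : (1 : ExteriorAlgebra R W) ∉
      Ideal.span (Set.range (ExteriorAlgebra.ι R (M := W))) := by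
    intro h
    have := ExtAux.Jker (1 : ExteriorAlgebra R W) h
    simp at this
  -- units of L
  have hunitsL : ∀ a : ExteriorAlgebra R W,
      a ∉ Ideal.span (Set.range (ExteriorAlgebra.ι R (M := W))) → IsUnit a := by
    intro a ha
    set c := ExteriorAlgebra.algebraMapInv (M := W) a with hc
    have hcne : c ≠ 0 := by
      intro h0
      apply ha
      have := ExtAux.nu_mem a
      rwa [← hc, h0, map_zero, sub_zero] at this
    have hj : a - algebraMap R _ c ∈
        Ideal.span (Set.range (ExteriorAlgebra.ι R (M := W))) := ExtAux.nu_mem a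
    have hnil : IsNilpotent (a - algebraMap R _ c) := ⟨d + 1, ExtAux.Jnilp d hdim _ hj⟩
    have hu : IsUnit (algebraMap R (ExteriorAlgebra R W) c) :=
      (Ne.isUnit hcne).map (algebraMap R (ExteriorAlgebra R W))
    have hcomm : Commute (a - algebraMap R _ c) (algebraMap R (ExteriorAlgebra R W) c) :=
      (Algebra.commutes c _).symm
    have := hnil.isUnit_add_left_of_commute hu hcomm
    rwa [add_sub_cancel] at this
  -- facts about P inside K
  have hPsubK : ∀ x ∈ P, x ∈ K := by
    intro x hx
    have : x ∈ Subalgebra.toSubmodule K := by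
      rw [part1]; exact Submodule.mem_sup_right hx
    exact this
  have hmemK : ∀ a : K, (a : ExteriorAlgebra R W) ∈
      ((1 : Submodule R (ExteriorAlgebra R W)) ⊔ P) := by
    intro a
    have : (a : ExteriorAlgebra R W) ∈ Subalgebra.toSubmodule K := a.2
    rwa [part1] at this
  have hPker : ∀ x ∈ P, ExteriorAlgebra.algebraMapInv (M := W) x = 0 := by
    intro x hx
    refine ExtAux.Jker x (ExtAux.powJ (d - 1) ?_)
    have : d - 1 + 1 = d := by omega
    rw [this]
    exact hx
  -- key multiplication lemma in K
  have hKmul : ∀ (a : K) (y : ExteriorAlgebra R W), y ∈ P →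
      (a : ExteriorAlgebra R W) * y ∈ P ∧ y * (a : ExteriorAlgebra R W) ∈ P := by
    intro a y hy
    obtain ⟨x1, hx1, p, hp, hsum⟩ := Submodule.mem_sup.mp (hmemK a)
    obtain ⟨r, rfl⟩ := Submodule.mem_one.mp hx1
    constructor
    · rw [← hsum, add_mul, hPP p hp y hy, add_zero, ← Algebra.smul_def]
      exact Submodule.smul_mem _ _ hy
    · rw [← hsum, mul_add, hPP y hy p hp, add_zero, ← Algebra.commutes r y,
        ← Algebra.smul_def]
      exact Submodule.smul_mem _ _ hy
  -- the odd ideal of K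
  let IK : Ideal K :=
    { carrier := {x : K | (x : ExteriorAlgebra R W) ∈ P}
      add_mem' := fun {x y} hx hy => by
        show ((x + y : K) : ExteriorAlgebra R W) ∈ P
        rw [Subalgebra.coe_add]
        exact P.add_mem hx hy
      zero_mem' := by
        show ((0 : K) : ExteriorAlgebra R W) ∈ P
        rw [Subalgebra.coe_zero]
        exact P.zero_mem
      smul_mem' := fun a x hx => by
        show (((a * x) : K) : ExteriorAlgebra R W) ∈ P
        rw [Subalgebra.coe_mul]
        exact (hKmul a _ hx).1 }
  have hIKspan : Ideal.span {x : K | (x : ExteriorAlgebra R W) ∈ P} = IK := by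
    have : {x : K | (x : ExteriorAlgebra R W) ∈ P} = (IK : Set K) := rfl
    rw [this, Ideal.span_eq]
  -- Noetherian for K
  have hKnoeth : IsNoetherianRing K := by
    have hfg : (Subalgebra.toSubmodule K).FG := by
      rw [part1]
      refine Submodule.FG.sup ?_ (hP1fg.pow d)
      rw [Submodule.one_eq_span]
      exact Submodule.fg_span_singleton _
    have hfin : Module.Finite R K := by
      have := Module.Finite.iff_fg (N := Subalgebra.toSubmodule K)
      exact this.mpr hfg
    have h1 : IsNoetherian R K := by infer_instance
    have h2 : IsNoetherian K K := isNoetherian_of_tower R h1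
    exact isNoetherianRing_iff.mpr h2
  -- 1 ∉ I_K
  have honeK : (1 : K) ∉ Ideal.span {x : K | (x : ExteriorAlgebra R W) ∈
      (LinearMap.range (ExteriorAlgebra.ι R (M := W)) ^ d :
        Submodule R (ExteriorAlgebra R W))} := by
    rw [← hP, hIKspan]
    intro h
    have h1 : ((1 : K) : ExteriorAlgebra R W) ∈ P := h
    rw [Subalgebra.coe_one] at h1
    have := hPker 1 h1
    simp at this
  -- units of K
  have hunitsK : ∀ a : K, a ∉ Ideal.span {x : K | (x : ExteriorAlgebra R W) ∈
      (LinearMap.range (ExteriorAlgebra.ι R (M := W)) ^ d :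
        Submodule R (ExteriorAlgebra R W))} → IsUnit a := by
    rw [← hP]
    intro a ha
    rw [hIKspan] at ha
    have haP : (a : ExteriorAlgebra R W) ∉ P := ha
    obtain ⟨x1, hx1, p, hp, hsum⟩ := Submodule.mem_sup.mp (hmemK a)
    obtain ⟨r, rfl⟩ := Submodule.mem_one.mp hx1
    have hrne : r ≠ 0 := by
      rintro rfl
      rw [map_zero, zero_add] at hsum
      exact haP (hsum ▸ hp)
    set m : K := a - algebraMap R K r with hm
    have hmco : (m : ExteriorAlgebra R W) = p := by
      rw [hm, Subalgebra.coe_sub]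
      rw [← hsum]
      simp
    have hmm : m * m = 0 :=
      Subtype.ext (by rw [Subalgebra.coe_mul, hmco, Subalgebra.coe_zero]; exact hPP p hp p hp)
    have ham : a = algebraMap R K r + m := by rw [hm]; abel
    have hnil : IsNilpotent m := ⟨2, by rw [pow_two, hmm]⟩
    have hu : IsUnit (algebraMap R K r) := (Ne.isUnit hrne).map (algebraMap R K)
    have hcomm : Commute m (algebraMap R K r) := (Algebra.commutes r m).symm
    have := hnil.isUnit_add_left_of_commute hu hcomm
    rwa [← ham] at this
  refine ⟨part1, hLnoeth, hone, hunitsL, hKnoeth, honeK, hunitsK, ?_⟩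
  -- Non-flatness
  intro hflat
  let I : Submodule R K := Submodule.comap (K.val.toLinearMap) P
  have hmemI : ∀ x : K, x ∈ I ↔ (x : ExteriorAlgebra R W) ∈ P := fun x => Iff.rfl
  have hIr : ∀ x ∈ I, ∀ a : K, x * a ∈ I := by
    intro x hx a
    have : ((x * a : K) : ExteriorAlgebra R W) ∈ P := by
      rw [Subalgebra.coe_mul]
      exact (hKmul a _ ((hmemI x).mp hx)).2
    exact (hmemI _).mpr this
  obtain ⟨ω, hωP, hωne⟩ := ExtAux.topnonvanish d hdim
  have hωK : ω ∈ K := hPsubK ω hωP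
  set x₀ : I := ⟨⟨ω, hωK⟩, (hmemI _).mpr hωP⟩ with hx₀
  have hx₀ne : x₀ ≠ 0 := by
    intro h
    apply hωne
    have := congrArg (fun y : I => ((y : K) : ExteriorAlgebra R W)) h
    simpa [hx₀] using this
  have hgex : ∃ g : Module.Dual R I, g x₀ ≠ 0 := by
    by_contra h
    push_neg at h
    exact hx₀ne ((Module.forall_dual_apply_eq_zero_iff R x₀).mp h)
  obtain ⟨g, hg⟩ := hgex
  set f : I →ₗ[R] R := (g x₀)⁻¹ • g with hf
  have hfx₀ : f x₀ = 1 := by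
    rw [hf]
    simp [inv_mul_cancel₀ hg]
  set φ : (I ⊗[R] ExteriorAlgebra R W) →ₗ[R] ExteriorAlgebra R W :=
    TensorProduct.lift ((LinearMap.lsmul R (ExteriorAlgebra R W)).comp f) with hφ
  have hφtmul : ∀ (x : I) (v : ExteriorAlgebra R W), φ (x ⊗ₜ[R] v) = f x • v := by
    intro x v
    rw [hφ, TensorProduct.lift.tmul]
    rfl
  have hWnt : Nontrivial W := Module.nontrivial_of_finrank_pos
    (R := R) (by rw [hdim]; omega)
  obtain ⟨w, hwne⟩ := exists_ne (0 : W)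
  have hιw : ExteriorAlgebra.ι R w ≠ 0 := by
    rwa [Ne, ExteriorAlgebra.ι_eq_zero_iff]
  have hιwP : ExteriorAlgebra.ι R w ∉ P := by
    intro h
    have h1 : ExteriorAlgebra.ι R w ∈
        (LinearMap.range (ExteriorAlgebra.ι R (M := W)) ^ 1 :
          Submodule R (ExteriorAlgebra R W)) := by
      rw [pow_one]; exact ⟨w, rfl⟩
    exact hιw (Submodule.disjoint_def.mp (ExtAux.hdisj 1 d (by omega)) _ h1 h)
  have hsmulK : ∀ (a : K) (v : ExteriorAlgebra R W),
      a • v = (a : ExteriorAlgebra R W) * v := fun a v => rfl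
  set z : I ⊗[R] ExteriorAlgebra R W := x₀ ⊗ₜ[R] ExteriorAlgebra.ι R w with hz
  have hz0 : mulTensor I z = 0 := by
    have h1 : mulTensor I z =
        ((x₀ : K) : ExteriorAlgebra R W) * ExteriorAlgebra.ι R w := by
      rw [hz, mulTensor, TensorProduct.lift.tmul]
      exact hsmulK _ _
    have h2 : ω * ExteriorAlgebra.ι R w ∈
        (LinearMap.range (ExteriorAlgebra.ι R (M := W)) ^ (d + 1) :
          Submodule R (ExteriorAlgebra R W)) := by
      rw [pow_succ]
      exact Submodule.mul_mem_mul hωP ⟨w, rfl⟩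
    rw [ExtAux.topvanish (d + 1) (by omega)] at h2
    rw [h1]
    simpa using h2
  have hspan := hflat I hIr z hz0
  have himg : ∀ u ∈ {u : I ⊗[R] ExteriorAlgebra R W |
      ∃ (x : I) (a : K) (v : ExteriorAlgebra R W) (h : (x : K) * a ∈ I),
        u = (⟨(x : K) * a, h⟩ : I) ⊗ₜ[R] v - x ⊗ₜ[R] (a • v)}, φ u ∈ P := by
    rintro u ⟨x, a, v, h, rfl⟩
    obtain ⟨x1, hx1, p, hp, hsum⟩ := Submodule.mem_sup.mp (hmemK a)
    obtain ⟨r, rfl⟩ := Submodule.mem_one.mp hx1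
    have hxP : ((x : K) : ExteriorAlgebra R W) ∈ P := (hmemI _).mp x.2
    have hxa : (⟨(x : K) * a, h⟩ : I) = r • x := by
      apply Subtype.ext
      apply Subtype.ext
      show ((x : K) : ExteriorAlgebra R W) * (a : ExteriorAlgebra R W) =
        ((((r • x : I) : K)) : ExteriorAlgebra R W)
      have hco : ((((r • x : I) : K)) : ExteriorAlgebra R W) =
          r • ((x : K) : ExteriorAlgebra R W) := rfl
      rw [hco, ← hsum, mul_add, hPP _ hxP p hp, add_zero,
        ← Algebra.commutes r (((x : K) : ExteriorAlgebra R W)), ← Algebra.smul_def]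
    have hav : (a : ExteriorAlgebra R W) * v = r • v + p * v := by
      rw [← hsum, add_mul, Algebra.smul_def]
    have hcalc : φ ((⟨(x : K) * a, h⟩ : I) ⊗ₜ[R] v - x ⊗ₜ[R] (a • v)) =
        -(f x • (p * v)) := by
      rw [map_sub, hφtmul, hφtmul, hxa, map_smul, hsmulK, hav]
      rw [smul_add, smul_smul, smul_eq_mul, mul_comm r (f x), ← smul_smul]
      abel
    rw [hcalc]
    exact neg_mem (Submodule.smul_mem _ _ (hPtop p hp v))
  have hφz : φ z ∈ P := by
    have hle : Submodule.span R {u : I ⊗[R] ExteriorAlgebra R W |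
        ∃ (x : I) (a : K) (v : ExteriorAlgebra R W) (h : (x : K) * a ∈ I),
          u = (⟨(x : K) * a, h⟩ : I) ⊗ₜ[R] v - x ⊗ₜ[R] (a • v)} ≤
        Submodule.comap φ P := Submodule.span_le.mpr himg
    exact hle hspan
  rw [hz, hφtmul, hfx₀, one_smul] at hφz
  exact hιwP hφz
end

section
/- Let D be a Hopf superalgebra acting on a D-simple D-superalgebra A (A is nonzero and has no nontrivial D-stable super-ideal). Then the subalgebra of D-invariants A^D is a field contained in the even part A_0. -/
open scoped TensorProduct

universe u

/-- A ℤ/2-grading making the `R`-algebra `A` into a superalgebra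
(not necessarily supercommutative). -/
structure SuperRing (R : Type u) [Field R] (A : Type u) [Ring A] [Algebra R A] where
  grade : ZMod 2 → Submodule R A
  internal : DirectSum.IsInternal grade
  one_mem : (1 : A) ∈ grade 0
  mul_mem : ∀ {i j : ZMod 2} {a b : A}, a ∈ grade i → b ∈ grade j → a * b ∈ grade (i + j)

/-- Super-commutativity of a superalgebra. -/
def SuperRing.SuperComm {R : Type u} [Field R] {A : Type u} [Ring A] [Algebra R A]
    (g : SuperRing R A) : Prop :=
  ∀ {i j : ZMod 2} {a b : A}, a ∈ g.grade i → b ∈ g.grade j →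
    a * b = ((-1 : R) ^ (i.val * j.val)) • (b * a)

/-- A super-cocommutative Hopf superalgebra structure on the `R`-algebra `D`.
Sign-sensitive axioms (super-cocommutativity, multiplicativity of the coproduct) are
expressed using arbitrary homogeneous finite representations of coproducts. -/
structure SuperHopf (R : Type u) [Field R] (D : Type u) [Ring D] [Algebra R D]
    extends SuperRing R D where
  comul : D →ₗ[R] D ⊗[R] D
  counit : D →ₗ[R] R
  coassoc : (TensorProduct.assoc R D D D).toLinearMap ∘ₗ
      (TensorProduct.map comul LinearMap.id) ∘ₗ comul
    = (TensorProduct.map LinearMap.id comul) ∘ₗ comul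
  counit_comul_left : ∀ d : D,
    (TensorProduct.lid R D) ((TensorProduct.map counit LinearMap.id) (comul d)) = d
  counit_comul_right : ∀ d : D,
    (TensorProduct.rid R D) ((TensorProduct.map LinearMap.id counit) (comul d)) = d
  comul_one : comul 1 = 1 ⊗ₜ[R] 1
  counit_one : counit 1 = 1
  comul_mul : ∀ (d d' : D) (ι κ : Type u) (s : Finset ι) (t : Finset κ)
    (x y : ι → D) (py : ι → ZMod 2) (w v : κ → D) (pw : κ → ZMod 2),
    (∀ i ∈ s, y i ∈ grade (py i)) → (∀ j ∈ t, w j ∈ grade (pw j)) →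
    (∑ i ∈ s, x i ⊗ₜ[R] y i) = comul d → (∑ j ∈ t, w j ⊗ₜ[R] v j) = comul d' →
    comul (d * d') = ∑ i ∈ s, ∑ j ∈ t,
      ((-1 : R) ^ ((py i).val * (pw j).val)) • ((x i * w j) ⊗ₜ[R] (y i * v j))
  counit_mul : ∀ d d' : D, counit (d * d') = counit d * counit d'
  comul_grade : ∀ (p : ZMod 2), ∀ d ∈ grade p, comul d ∈
    ⨆ q : ZMod 2, LinearMap.range
      (TensorProduct.map (grade q).subtype (grade (p - q)).subtype)
  counit_odd : ∀ d ∈ grade 1, counit d = 0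
  cocomm : ∀ (d : D) (ι : Type u) (s : Finset ι) (x y : ι → D) (px py : ι → ZMod 2),
    (∀ i ∈ s, x i ∈ grade (px i)) → (∀ i ∈ s, y i ∈ grade (py i)) →
    (∑ i ∈ s, x i ⊗ₜ[R] y i) = comul d →
    (∑ i ∈ s, ((-1 : R) ^ ((px i).val * (py i).val)) • (y i ⊗ₜ[R] x i)) = comul d
  antipode : D →ₗ[R] D
  antipode_left : ∀ d : D,
    (LinearMap.mul' R D) ((TensorProduct.map antipode LinearMap.id) (comul d))
      = counit d • 1
  antipode_right : ∀ d : D,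
    (LinearMap.mul' R D) ((TensorProduct.map LinearMap.id antipode) (comul d))
      = counit d • 1

/-- A (left) action of the Hopf superalgebra `D` on the superalgebra `A`, making `A`
a `D`-superalgebra, i.e. an algebra in the symmetric monoidal category of
`D`-supermodules; the Koszul sign in the multiplicativity axiom is expressed via
homogeneous representations of the coproduct. -/
structure SuperAction (R : Type u) [Field R] (D A : Type u) [Ring D] [Algebra R D]
    [Ring A] [Algebra R A] (H : SuperHopf R D) (g : SuperRing R A) where
  act : D →ₗ[R] A →ₗ[R] A
  act_one : act 1 = LinearMap.id
  act_mul : ∀ d d' : D, act (d * d') = act d ∘ₗ act d'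
  act_grade : ∀ {p q : ZMod 2} {d : D} {a : A}, d ∈ H.grade p → a ∈ g.grade q →
    act d a ∈ g.grade (p + q)
  act_algebra_one : ∀ d : D, act d (1 : A) = H.counit d • (1 : A)
  act_algebra_mul : ∀ (d : D) (a b : A) (p : ZMod 2), a ∈ g.grade p →
    ∀ (ι : Type u) (s : Finset ι) (x y : ι → D) (py : ι → ZMod 2),
    (∀ i ∈ s, y i ∈ H.grade (py i)) →
    (∑ i ∈ s, x i ⊗ₜ[R] y i) = H.comul d →
    act d (a * b) = ∑ i ∈ s,
      ((-1 : R) ^ (p.val * (py i).val)) • (act (x i) a * act (y i) b)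

/-- The `D`-invariants `A^D` of a `D`-superalgebra. -/
def SuperAction.invariants {R : Type u} [Field R] {D A : Type u} [Ring D] [Algebra R D]
    [Ring A] [Algebra R A] {H : SuperHopf R D} {g : SuperRing R A}
    (S : SuperAction R D A H g) : Submodule R A where
  carrier := {a : A | ∀ d : D, S.act d a = H.counit d • a}
  add_mem' := by
    intro a b ha hb
    intro d
    simp only [map_add, ha d, hb d, smul_add]
  zero_mem' := by intro d; simp
  smul_mem' := by
    intro r a ha
    intro d
    simp only [map_smul, ha d]
    rw [smul_comm]

/-- A homogeneous two-sided ideal (super-ideal). -/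
def SuperRing.IsSuperIdeal {R : Type u} [Field R] {A : Type u} [Ring A] [Algebra R A]
    (g : SuperRing R A) (I : Submodule R A) : Prop :=
  (∀ a : A, ∀ x ∈ I, a * x ∈ I) ∧ (∀ a : A, ∀ x ∈ I, x * a ∈ I) ∧
    I = (I ⊓ g.grade 0) ⊔ (I ⊓ g.grade 1)

/-- `D`-simplicity: `A ≠ 0` and `A` has no nontrivial `D`-stable super-ideal. -/
def SuperAction.IsSimple {R : Type u} [Field R] {D A : Type u} [Ring D] [Algebra R D]
    [Ring A] [Algebra R A] {H : SuperHopf R D} {g : SuperRing R A}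
    (S : SuperAction R D A H g) : Prop :=
  (1 : A) ≠ 0 ∧ ∀ I : Submodule R A, g.IsSuperIdeal I →
    (∀ d : D, ∀ x ∈ I, S.act d x ∈ I) → I = ⊥ ∨ I = ⊤

/-!
STATEMENT 5: Let `D` be a (super-cocommutative) Hopf superalgebra acting on a
`D`-simple `D`-superalgebra `A`.  Then the subalgebra of `D`-invariants `A^D` is a
field contained in the even part `A₀`: it contains `1`, is closed under
multiplication, every nonzero element of it has a multiplicative inverse in it, and
it is contained in `grade 0`.
-/

section Aux

variable {R : Type u} [Field R] [CharZero R]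

/-- Every element decomposes as even + odd. -/
lemma SuperRing.decomp {B : Type u} [Ring B] [Algebra R B] (g : SuperRing R B) (a : B) :
    ∃ a0 ∈ g.grade 0, ∃ a1 ∈ g.grade 1, a = a0 + a1 := by
  have h : a ∈ (⊤ : Submodule R B) := trivial
  rw [← g.internal.submodule_iSup_eq_top] at h
  have h2 : (⨆ i, g.grade i) ≤ g.grade 0 ⊔ g.grade 1 := by
    apply iSup_le
    intro i
    rcases (by decide : ∀ x : ZMod 2, x = 0 ∨ x = 1) i with h | h <;> subst h
    · exact le_sup_left
    · exact le_sup_right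
  rcases Submodule.mem_sup.mp (h2 h) with ⟨a0, h0, a1, h1, hsum⟩
  exact ⟨a0, h0, a1, h1, hsum.symm⟩

lemma SuperRing.zero_of_mem_both {B : Type u} [Ring B] [Algebra R B] (g : SuperRing R B)
    {x : B} (h0 : x ∈ g.grade 0) (h1 : x ∈ g.grade 1) : x = 0 := by
  have hind := g.internal.submodule_iSupIndep (0 : ZMod 2)
  have hle : g.grade 1 ≤ ⨆ (j : ZMod 2) (_ : j ≠ 0), g.grade j :=
    le_iSup_of_le 1 (le_iSup_of_le (by decide) le_rfl)
  exact (Submodule.eq_bot_iff _).mp (disjoint_iff.mp hind) x ⟨h0, hle h1⟩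

lemma SuperRing.components_eq {B : Type u} [Ring B] [Algebra R B] (g : SuperRing R B)
    {u0 u1 v0 v1 : B} (hu0 : u0 ∈ g.grade 0) (hu1 : u1 ∈ g.grade 1)
    (hv0 : v0 ∈ g.grade 0) (hv1 : v1 ∈ g.grade 1) (h : u0 + u1 = v0 + v1) :
    u0 = v0 ∧ u1 = v1 := by
  have hdiff : u0 - v0 = v1 - u1 := by
    have := h
    abel_nf
    abel_nf at this
    linear_combination (norm := abel) this
  have hz : u0 - v0 = 0 := by
    refine g.zero_of_mem_both (Submodule.sub_mem _ hu0 hv0) ?_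
    rw [hdiff]; exact Submodule.sub_mem _ hv1 hu1
  constructor
  · exact sub_eq_zero.mp hz
  · have : v1 - u1 = 0 := by rw [← hdiff]; exact hz
    exact (sub_eq_zero.mp this).symm

end Aux

section Aux2

variable {R D A : Type u} [Field R] [CharZero R] [Ring D] [Algebra R D]
    [Ring A] [Algebra R A]

/-- Representation property for tensors with homogeneous right factor. -/
def HomRep (H : SuperHopf R D) (t : D ⊗[R] D) : Prop :=
  ∃ (ι : Type u) (s : Finset ι) (x y : ι → D) (py : ι → ZMod 2),
    (∀ i ∈ s, y i ∈ H.grade (py i)) ∧ (∑ i ∈ s, x i ⊗ₜ[R] y i) = t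

lemma HomRep.add {H : SuperHopf R D} {t t' : D ⊗[R] D} (h : HomRep H t) (h' : HomRep H t') :
    HomRep H (t + t') := by
  obtain ⟨ι, s, x, y, py, hy, hrep⟩ := h
  obtain ⟨κ, u, w, v, pv, hv, hrep'⟩ := h'
  refine ⟨ι ⊕ κ, s.disjSum u, Sum.elim x w, Sum.elim y v, Sum.elim py pv, ?_, ?_⟩
  · intro i hi
    rcases Finset.mem_disjSum.mp hi with ⟨a, ha, rfl⟩ | ⟨b, hb, rfl⟩
    · exact hy a ha
    · exact hv b hb
  · rw [Finset.sum_disjSum]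
    simp only [Sum.elim_inl, Sum.elim_inr, hrep, hrep']

lemma HomRep.single {H : SuperHopf R D} {x y : D} {p : ZMod 2} (hy : y ∈ H.grade p) :
    HomRep H (x ⊗ₜ[R] y) :=
  ⟨PUnit, {PUnit.unit}, fun _ => x, fun _ => y, fun _ => p,
    fun _ _ => hy, by rw [Finset.sum_singleton]⟩

lemma homRep_all (H : SuperHopf R D) (t : D ⊗[R] D) : HomRep H t := by
  induction t using TensorProduct.induction_on with
  | zero =>
      exact ⟨PUnit, ∅, fun _ => 0, fun _ => 0, fun _ => 0, fun i hi => by simp at hi, by simp⟩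
  | tmul x y =>
      obtain ⟨y0, h0, y1, h1, rfl⟩ := H.toSuperRing.decomp y
      rw [TensorProduct.tmul_add]
      exact (HomRep.single h0).add (HomRep.single h1)
  | add t t' ih ih' => exact ih.add ih'

lemma rep_counit_sum (H : SuperHopf R D) {d : D} {ι : Type u} {s : Finset ι}
    {x y : ι → D} (h : (∑ i ∈ s, x i ⊗ₜ[R] y i) = H.comul d) :
    ∑ i ∈ s, H.counit (y i) • x i = d := by
  have h2 := H.counit_comul_right d
  rw [← h] at h2
  simpa [map_sum] using h2

lemma mem_invariants_iff {H : SuperHopf R D} {g : SuperRing R A}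
    (S : SuperAction R D A H g) {a : A} :
    a ∈ S.invariants ↔ ∀ d : D, S.act d a = H.counit d • a := Iff.rfl

/-- Key lemma: acting on `x * a` for `a` invariant. -/
lemma act_mul_invariant {H : SuperHopf R D} {g : SuperRing R A}
    (S : SuperAction R D A H g) {a : A} (ha : a ∈ S.invariants) (d : D) (x : A) :
    S.act d (x * a) = S.act d x * a := by
  obtain ⟨ι, s, xs, ys, py, hhom, hrep⟩ := homRep_all H (H.comul d)
  have key : ∀ (p : ZMod 2) (xp : A), xp ∈ g.grade p →
      S.act d (xp * a) = S.act d xp * a := by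
    intro p xp hxp
    rw [S.act_algebra_mul d xp a p hxp ι s xs ys py hhom hrep]
    have hterm : ∀ i ∈ s, ((-1 : R) ^ (p.val * (py i).val)) •
        (S.act (xs i) xp * S.act (ys i) a)
        = H.counit (ys i) • (S.act (xs i) xp * a) := by
      intro i hi
      have hya : S.act (ys i) a = H.counit (ys i) • a :=
        (mem_invariants_iff S).mp ha (ys i)
      rcases (by decide : ∀ c : ZMod 2, c = 0 ∨ c = 1) (py i) with h | h
      · rw [hya, h]
        simp [mul_smul_comm]
      · have hc0 : H.counit (ys i) = 0 := H.counit_odd _ (h ▸ hhom i hi)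
        rw [hya, hc0]
        simp
    rw [Finset.sum_congr rfl hterm]
    have : ∑ i ∈ s, H.counit (ys i) • (S.act (xs i) xp * a)
        = (∑ i ∈ s, H.counit (ys i) • S.act (xs i) xp) * a := by
      rw [Finset.sum_mul]
      exact Finset.sum_congr rfl fun i _ => (smul_mul_assoc _ _ _).symm
    rw [this]
    congr 1
    have := rep_counit_sum H hrep
    calc ∑ i ∈ s, H.counit (ys i) • S.act (xs i) xp
        = S.act (∑ i ∈ s, H.counit (ys i) • xs i) xp := by
          rw [map_sum, LinearMap.sum_apply]
          exact Finset.sum_congr rfl fun i _ => by rw [map_smul, LinearMap.smul_apply]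
      _ = S.act d xp := by rw [this]
  obtain ⟨x0, hx0, x1, hx1, rfl⟩ := g.decomp x
  rw [add_mul, map_add, map_add, key 0 x0 hx0, key 1 x1 hx1, add_mul]

end Aux2
section Aux3

variable {R D A : Type u} [Field R] [CharZero R] [Ring D] [Algebra R D]
    [Ring A] [Algebra R A]

/-- Homogeneous components of an invariant element are invariant. -/
lemma components_invariant {H : SuperHopf R D} {g : SuperRing R A}
    (S : SuperAction R D A H g) {a a0 a1 : A} (ha : a ∈ S.invariants)
    (h0 : a0 ∈ g.grade 0) (h1 : a1 ∈ g.grade 1) (hsum : a = a0 + a1) :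
    a0 ∈ S.invariants ∧ a1 ∈ S.invariants := by
  have key : ∀ d : D, S.act d a0 = H.counit d • a0 ∧ S.act d a1 = H.counit d • a1 := by
    intro d
    obtain ⟨d0, hd0, d1, hd1, rfl⟩ := H.toSuperRing.decomp d
    -- even part action
    have hev := (mem_invariants_iff S).mp ha d0
    rw [hsum, map_add, smul_add] at hev
    have hev2 := g.components_eq (S.act_grade hd0 h0) (S.act_grade hd0 h1)
      (Submodule.smul_mem _ _ h0) (Submodule.smul_mem _ _ h1) hev
    -- odd part action
    have hodc : H.counit d1 = 0 := H.counit_odd _ hd1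
    have hod := (mem_invariants_iff S).mp ha d1
    rw [hsum, map_add, hodc, zero_smul] at hod
    have hod' : S.act d1 a1 + S.act d1 a0 = (0 : A) + (0 : A) := by
      rw [add_zero]
      rw [← hod]
      abel
    have hod2 := g.components_eq (S.act_grade hd1 h1) (S.act_grade hd1 h0)
      (Submodule.zero_mem _) (Submodule.zero_mem _) hod'
    have hcnt : H.counit (d0 + d1) = H.counit d0 := by rw [map_add, hodc, add_zero]
    constructor
    · rw [map_add, LinearMap.add_apply, hev2.1, hod2.2, add_zero, hcnt]
    · rw [map_add, LinearMap.add_apply, hev2.2, hod2.1, add_zero, hcnt]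
  exact ⟨fun d => (key d).1, fun d => (key d).2⟩

/-- For a nonzero homogeneous invariant element, there is a left inverse. -/
lemma exists_left_inv {H : SuperHopf R D} {g : SuperRing R A} (hg : g.SuperComm)
    (S : SuperAction R D A H g) (hs : S.IsSimple) {q : ZMod 2} {c : A}
    (hc : c ∈ S.invariants) (hq : c ∈ g.grade q) (hne : c ≠ 0) :
    ∃ b : A, b * c = 1 := by
  set I : Submodule R A := LinearMap.range (LinearMap.mulRight R c) with hI
  have hmem : ∀ x : A, x * c ∈ I := fun x => ⟨x, rfl⟩
  have hmem' : ∀ y ∈ I, ∃ x : A, x * c = y := by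
    rintro y ⟨x, rfl⟩
    exact ⟨x, rfl⟩
  have hsuper : g.IsSuperIdeal I := by
    refine ⟨?_, ?_, ?_⟩
    · rintro a y ⟨x, rfl⟩
      have : a * (x * c) = (a * x) * c := (mul_assoc _ _ _).symm
      rw [LinearMap.mulRight_apply, this]
      exact hmem _
    · rintro a y ⟨x, rfl⟩
      rw [LinearMap.mulRight_apply]
      obtain ⟨a0, ha0, a1, ha1, rfl⟩ := g.decomp a
      have e0 : c * a0 = ((-1 : R) ^ (q.val * (0 : ZMod 2).val)) • (a0 * c) := hg hq ha0
      have e1 : c * a1 = ((-1 : R) ^ (q.val * (1 : ZMod 2).val)) • (a1 * c) := hg hq ha1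
      have : (x * c) * (a0 + a1) = x * (c * a0) + x * (c * a1) := by
        rw [mul_add, mul_assoc, mul_assoc]
      rw [this, e0, e1, mul_smul_comm, mul_smul_comm]
      apply Submodule.add_mem <;> apply Submodule.smul_mem <;>
        [skip; skip] <;> rw [← mul_assoc] <;> exact hmem _
    · apply le_antisymm
      · rintro y ⟨x, rfl⟩
        rw [LinearMap.mulRight_apply]
        obtain ⟨x0, hx0, x1, hx1, rfl⟩ := g.decomp x
        rw [add_mul]
        have m0 := g.mul_mem hx0 hq
        have m1 := g.mul_mem hx1 hq
        rcases (by decide : ∀ z : ZMod 2, z = 0 ∨ z = 1) q with h | h <;> subst h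
        · rw [(by decide : (0 + 0 : ZMod 2) = 0)] at m0
          rw [(by decide : (1 + 0 : ZMod 2) = 1)] at m1
          exact Submodule.add_mem _
            (Submodule.mem_sup_left ⟨hmem x0, m0⟩)
            (Submodule.mem_sup_right ⟨hmem x1, m1⟩)
        · rw [(by decide : (0 + 1 : ZMod 2) = 1)] at m0
          rw [(by decide : (1 + 1 : ZMod 2) = 0)] at m1
          exact Submodule.add_mem _
            (Submodule.mem_sup_right ⟨hmem x0, m0⟩)
            (Submodule.mem_sup_left ⟨hmem x1, m1⟩)
      · exact sup_le inf_le_left inf_le_left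
  have hDstable : ∀ d : D, ∀ y ∈ I, S.act d y ∈ I := by
    rintro d y ⟨x, rfl⟩
    rw [LinearMap.mulRight_apply, act_mul_invariant S hc]
    exact hmem _
  rcases hs.2 I hsuper hDstable with hbot | htop
  · exfalso
    apply hne
    have : c ∈ I := by simpa using hmem 1
    rw [hbot] at this
    simpa using this
  · have : (1 : A) ∈ I := by rw [htop]; trivial
    exact hmem' 1 this

end Aux3
theorem stmt5 {R D A : Type u} [Field R] [CharZero R] [Ring D] [Algebra R D]
    [Ring A] [Algebra R A] (H : SuperHopf R D) (g : SuperRing R A)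
    (hg : g.SuperComm) (S : SuperAction R D A H g) (hs : S.IsSimple) :
    S.invariants ≤ g.grade 0 ∧
    (1 : A) ∈ S.invariants ∧
    (∀ a ∈ S.invariants, ∀ b ∈ S.invariants, a * b ∈ S.invariants) ∧
    (∀ a ∈ S.invariants, a ≠ 0 → ∃ b ∈ S.invariants, a * b = 1) := by
  have h2 : (1 : A) ∈ S.invariants :=
    (mem_invariants_iff S).mpr fun d => S.act_algebra_one d
  have h1 : S.invariants ≤ g.grade 0 := by
    intro a ha
    obtain ⟨a0, ha0, a1, ha1, hsum⟩ := g.decomp a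
    obtain ⟨-, hainv1⟩ := components_invariant S ha ha0 ha1 hsum
    have hsq : a1 * a1 = 0 := by
      have hcomm := hg ha1 ha1
      rw [(by decide : ((1 : ZMod 2).val * (1 : ZMod 2).val) = 1), pow_one,
        neg_one_smul] at hcomm
      have h2s : (2 : R) • (a1 * a1) = 0 := by
        rw [two_smul]
        nth_rewrite 1 [hcomm]
        rw [neg_add_cancel]
      calc a1 * a1 = ((2 : R)⁻¹ * 2) • (a1 * a1) := by
            rw [inv_mul_cancel₀ (two_ne_zero), one_smul]
        _ = (2 : R)⁻¹ • ((2 : R) • (a1 * a1)) := by rw [mul_smul]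
        _ = 0 := by rw [h2s, smul_zero]
    by_cases hz : a1 = 0
    · rw [hz, add_zero] at hsum
      rw [hsum]; exact ha0
    · exfalso
      obtain ⟨b, hb⟩ := exists_left_inv hg S hs hainv1 ha1 hz
      obtain ⟨b0, hb0, b1, hb1, rfl⟩ := g.decomp b
      have e0 : a1 * b0 = b0 * a1 := by
        have := hg ha1 hb0
        rwa [(by decide : ((1 : ZMod 2).val * (0 : ZMod 2).val) = 0), pow_zero,
          one_smul] at this
      have e1 : a1 * b1 = -(b1 * a1) := by
        have := hg ha1 hb1
        rwa [(by decide : ((1 : ZMod 2).val * (1 : ZMod 2).val) = 1), pow_one,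
          neg_one_smul] at this
      have hone : (1 : A) = 0 := by
        calc (1 : A) = ((b0 + b1) * a1) * ((b0 + b1) * a1) := by rw [hb, one_mul]
          _ = (b0 + b1) * ((a1 * (b0 + b1)) * a1) := by
              rw [mul_assoc, mul_assoc, ← mul_assoc a1]
          _ = (b0 + b1) * ((b0 * a1 + -(b1 * a1)) * a1) := by rw [mul_add, e0, e1]
          _ = (b0 + b1) * (b0 * (a1 * a1) + -(b1 * (a1 * a1))) := by
              noncomm_ring
          _ = 0 := by rw [hsq, mul_zero, mul_zero, neg_zero, add_zero, mul_zero]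
      exact hs.1 hone
  refine ⟨h1, h2, ?_, ?_⟩
  · intro a ha b hb
    refine (mem_invariants_iff S).mpr fun d => ?_
    rw [act_mul_invariant S hb, (mem_invariants_iff S).mp ha d, smul_mul_assoc]
  · intro a ha hane
    have ha0 : a ∈ g.grade 0 := h1 ha
    obtain ⟨b, hb⟩ := exists_left_inv hg S hs ha ha0 hane
    have hcent : ∀ x : A, a * x = x * a := by
      intro x
      obtain ⟨x0, hx0, x1, hx1, rfl⟩ := g.decomp x
      have e0 : a * x0 = x0 * a := by
        have := hg ha0 hx0
        rwa [(by decide : ((0 : ZMod 2).val * (0 : ZMod 2).val) = 0), pow_zero,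
          one_smul] at this
      have e1 : a * x1 = x1 * a := by
        have := hg ha0 hx1
        rwa [(by decide : ((0 : ZMod 2).val * (1 : ZMod 2).val) = 0), pow_zero,
          one_smul] at this
      rw [mul_add, add_mul, e0, e1]
    have hab : a * b = 1 := by rw [hcent b, hb]
    have hbinv : b ∈ S.invariants := by
      refine (mem_invariants_iff S).mpr fun d => ?_
      have h5 := act_mul_invariant S ha d b
      rw [hb, S.act_algebra_one] at h5
      have h6 : (H.counit d • b) * a = H.counit d • (1 : A) := by
        rw [smul_mul_assoc, hb]
      have h7 : (S.act d b - H.counit d • b) * a = 0 := by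
        rw [sub_mul, ← h5, h6, sub_self]
      have h8 : S.act d b - H.counit d • b = 0 := by
        calc S.act d b - H.counit d • b
            = (S.act d b - H.counit d • b) * (a * b) := by rw [hab, mul_one]
          _ = ((S.act d b - H.counit d • b) * a) * b := by rw [mul_assoc]
          _ = 0 := by rw [h7, zero_mul]
      exact sub_eq_zero.mp h8
    exact ⟨b, hbinv, hab⟩
end

section
/- Let H be a super-commutative Hopf superalgebra over a field k, A an H-supercomodule superalgebra with coaction θ_A, and K a sub-superalgebra of A such that the map Ξ_A : A ⊗_k A → A ⊗_k H, a ⊗ a' ↦ a·θ_A(a'), induces an isomorphism A ⊗_K A ≅ A ⊗_k H. If A is faithfully flat over K, or if K is self-injective as a K-supermodule, then K = A^{co H}, the subalgebra of H-coinvariants. -/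
set_option maxSynthPendingDepth 3
set_option synthInstance.maxHeartbeats 1000000
set_option maxHeartbeats 1000000


open scoped TensorProduct

universe u

/-- A right `H`-supercomodule superalgebra structure on `A`, for a super-commutative
Hopf superalgebra `H`: a coassociative, counital coaction `θ : A → A ⊗ H` which is an
algebra morphism for the (signed) super tensor-product algebra structure, expressed
via homogeneous representations. -/
structure SuperComodAlg (k : Type u) [Field k] (HH A : Type u) [Ring HH] [Algebra k HH]
    [Ring A] [Algebra k A] (gH : SuperHopf k HH) (gA : SuperRing k A) where
  coact : A →ₗ[k] A ⊗[k] HH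
  coassoc : ∀ a : A,
    (TensorProduct.assoc k A HH HH).toLinearMap
        ((LinearMap.rTensor HH coact) (coact a))
      = (LinearMap.lTensor A gH.comul) (coact a)
  counit_coact : ∀ a : A,
    (TensorProduct.rid k A) ((LinearMap.lTensor A gH.counit) (coact a)) = a
  coact_one : coact 1 = 1 ⊗ₜ[k] 1
  coact_mul : ∀ (a b : A) (ι κ : Type u) (s : Finset ι) (t : Finset κ)
    (xa : ι → A) (xh : ι → HH) (ph : ι → ZMod 2)
    (yb : κ → A) (pb : κ → ZMod 2) (yk : κ → HH),
    (∀ i ∈ s, xh i ∈ gH.grade (ph i)) → (∀ j ∈ t, yb j ∈ gA.grade (pb j)) →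
    (∑ i ∈ s, xa i ⊗ₜ[k] xh i) = coact a → (∑ j ∈ t, yb j ⊗ₜ[k] yk j) = coact b →
    coact (a * b) = ∑ i ∈ s, ∑ j ∈ t,
      ((-1 : k) ^ ((ph i).val * (pb j).val)) • ((xa i * yb j) ⊗ₜ[k] (xh i * yk j))
  coact_grade : ∀ (p : ZMod 2), ∀ a ∈ gA.grade p, coact a ∈
    ⨆ q : ZMod 2, LinearMap.range
      (TensorProduct.map (gA.grade q).subtype (gH.grade (p - q)).subtype)

/-- The `H`-coinvariants `A^{co H}`. -/
def SuperComodAlg.coinvariants {k : Type u} [Field k] {HH A : Type u} [Ring HH]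
    [Algebra k HH] [Ring A] [Algebra k A] {gH : SuperHopf k HH} {gA : SuperRing k A}
    (C : SuperComodAlg k HH A gH gA) : Set A :=
  {a : A | C.coact a = a ⊗ₜ[k] (1 : HH)}

section Maps

variable {k : Type u} [Field k] {HH A : Type u} [Ring HH] [Algebra k HH]
  [Ring A] [Algebra k A] {gH : SuperHopf k HH} {gA : SuperRing k A}

/-- The Galois-type map `Ξ_A : A ⊗ A → A ⊗ H`, `a ⊗ a' ↦ a·θ(a')`. -/
noncomputable def XiLin (C : SuperComodAlg k HH A gH gA) :
    A ⊗[k] A →ₗ[k] A ⊗[k] HH :=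
  TensorProduct.lift (LinearMap.mk₂ k
    (fun a b => ((Algebra.TensorProduct.includeLeft : A →ₐ[k] A ⊗[k] HH) a) * C.coact b)
    (fun a a' b => by
      simp [Algebra.TensorProduct.includeLeft_apply, TensorProduct.add_tmul, add_mul])
    (fun r a b => by
      show (r • a) ⊗ₜ[k] (1 : HH) * C.coact b = r • (a ⊗ₜ[k] (1 : HH) * C.coact b)
      rw [← TensorProduct.smul_tmul', smul_mul_assoc])
    (fun a b b' => by simp [mul_add])
    (fun r a b => by simp [mul_smul_comm]))

/-- The submodule of `A ⊗ A` of relations over a subalgebra `K`, whose quotient is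
`A ⊗_K A`. -/
def relK (K : Subalgebra k A) : Submodule k (A ⊗[k] A) :=
  Submodule.span k {z : A ⊗[k] A | ∃ (a b c : A), c ∈ K ∧
    z = (a * c) ⊗ₜ[k] b - a ⊗ₜ[k] (c * b)}

/-- The multiplication map `I ⊗ A → A` for an `R`-subspace `I ⊆ A`. -/
noncomputable def mulMapI (I : Submodule k A) : (↥I ⊗[k] A) →ₗ[k] A :=
  TensorProduct.lift (LinearMap.mk₂ k (fun x a => (x : A) * a)
    (fun x y a => by simp [add_mul])
    (fun r x a => by simp [smul_mul_assoc])
    (fun x a b => by simp [mul_add])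
    (fun r x a => by simp [mul_smul_comm]))

/-- Faithful flatness of `A` over a subalgebra `K`, expressed via the ideal
criterion (flatness) together with `I·A ≠ A` for proper right ideals `I` of `K`. -/
def FaithfullyFlatOver (K : Subalgebra k A) : Prop :=
  (∀ I : Submodule k A, I ≤ Subalgebra.toSubmodule K →
    (∀ x ∈ I, ∀ c ∈ K, x * c ∈ I) →
    ∀ z : ↥I ⊗[k] A, mulMapI I z = 0 →
      z ∈ Submodule.span k {w : ↥I ⊗[k] A |
        ∃ (x : ↥I) (c : A) (a : A) (_ : c ∈ K) (h : (x : A) * c ∈ I),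
          w = (⟨(x : A) * c, h⟩ : ↥I) ⊗ₜ[k] a - x ⊗ₜ[k] (c * a)}) ∧
  (∀ I : Submodule k A, I ≤ Subalgebra.toSubmodule K →
    (∀ x ∈ I, ∀ c ∈ K, x * c ∈ I) → I ≠ Subalgebra.toSubmodule K →
    Submodule.span k {y : A | ∃ x ∈ I, ∃ a : A, y = x * a} ≠ ⊤)

end Maps

section Stmt18Aux
open LinearMap

section FFaux

variable {k A : Type u} [Field k] [Ring A] [Algebra k A] (K : Subalgebra k A)

/-- multiplication map `K ⊗ A → A`. -/
noncomputable def mulKmap : (↥K ⊗[k] A) →ₗ[k] A :=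
  TensorProduct.lift ((LinearMap.mul k A) ∘ₗ K.val.toLinearMap)

@[simp] lemma mulKmap_tmul (c : ↥K) (b : A) : mulKmap K (c ⊗ₜ[k] b) = (c : A) * b := by
  simp [mulKmap]

variable (V : Type u) [AddCommGroup V] [Module k V]

/-- right action of `c ∈ K` on `V ⊗ K`. -/
noncomputable def rK (c : ↥K) : (V ⊗[k] ↥K) →ₗ[k] (V ⊗[k] ↥K) :=
  LinearMap.lTensor V (LinearMap.mulRight k c)

@[simp] lemma rK_tmul (c c' : ↥K) (v : V) : rK K V c (v ⊗ₜ[k] c') = v ⊗ₜ[k] (c' * c) := by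
  simp [rK]

/-- evaluation `(V ⊗ K) ⊗ A → V ⊗ A`. -/
noncomputable def evK : ((V ⊗[k] ↥K) ⊗[k] A) →ₗ[k] (V ⊗[k] A) :=
  (LinearMap.lTensor V (mulKmap K)) ∘ₗ (TensorProduct.assoc k V ↥K A).toLinearMap

@[simp] lemma evK_tmul (v : V) (c : ↥K) (b : A) :
    evK K V ((v ⊗ₜ[k] c) ⊗ₜ[k] b) = v ⊗ₜ[k] ((c : A) * b) := by
  simp [evK]

lemma evK_rK (c : ↥K) (ξ : V ⊗[k] ↥K) (b : A) :
    evK K V ((rK K V c ξ) ⊗ₜ[k] b) = evK K V (ξ ⊗ₜ[k] ((c : A) * b)) := by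
  induction ξ using TensorProduct.induction_on with
  | zero => simp
  | tmul v c' => simp [mul_assoc]
  | add x y hx hy =>
      rw [map_add, TensorProduct.add_tmul, TensorProduct.add_tmul, map_add, map_add, hx, hy]

/-- right `K`-stability of a subspace of `V ⊗ K`. -/
def RStab (T : Submodule k (V ⊗[k] ↥K)) : Prop :=
  ∀ (c : ↥K), ∀ x ∈ T, rK K V c x ∈ T

/-- the relations submodule of `T ⊗ A` defining `T ⊗_K A`. -/
noncomputable def relT (T : Submodule k (V ⊗[k] ↥K)) : Submodule k (↥T ⊗[k] A) :=
  Submodule.span k {w : ↥T ⊗[k] A | ∃ (x : ↥T) (c : ↥K) (b : A) (h : rK K V c ↑x ∈ T),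
    w = ((⟨rK K V c ↑x, h⟩ : ↥T) ⊗ₜ[k] b) - (x ⊗ₜ[k] ((c : A) * b))}

/-- induced map `T ⊗ A → V ⊗ A`. -/
noncomputable def thT (T : Submodule k (V ⊗[k] ↥K)) : (↥T ⊗[k] A) →ₗ[k] (V ⊗[k] A) :=
  (evK K V) ∘ₗ (LinearMap.rTensor A T.subtype)

@[simp] lemma thT_tmul (T : Submodule k (V ⊗[k] ↥K)) (x : ↥T) (b : A) :
    thT K V T (x ⊗ₜ[k] b) = evK K V ((x : V ⊗[k] ↥K) ⊗ₜ[k] b) := by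
  simp [thT]

lemma relT_le_ker (T : Submodule k (V ⊗[k] ↥K)) : relT K V T ≤ ker (thT K V T) := by
  rw [relT, Submodule.span_le]
  rintro w ⟨x, c, b, h, rfl⟩
  simp only [SetLike.mem_coe, mem_ker, map_sub, thT_tmul]
  rw [evK_rK, sub_self]


section Pull

variable {V' : Type u} [AddCommGroup V'] [Module k V'] (ι : V' →ₗ[k] V)

lemma rK_rTensor (c : ↥K) (ξ : V' ⊗[k] ↥K) :
    LinearMap.rTensor ↥K ι (rK K V' c ξ) = rK K V c (LinearMap.rTensor ↥K ι ξ) := by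
  induction ξ using TensorProduct.induction_on with
  | zero => simp
  | tmul v c' => simp
  | add x y hx hy => simp only [map_add, hx, hy]

/-- pullback of a subspace of `V ⊗ K` along `ι : V' → V`. -/
noncomputable def Tpull (T : Submodule k (V ⊗[k] ↥K)) : Submodule k (V' ⊗[k] ↥K) :=
  T.comap (LinearMap.rTensor ↥K ι)

lemma Tpull_stab (T : Submodule k (V ⊗[k] ↥K)) (hT : RStab K V T) :
    RStab K V' (Tpull K V ι T) := by
  intro c x hx
  simp only [Tpull, Submodule.mem_comap] at hx ⊢
  rw [rK_rTensor]
  exact hT c _ hx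

/-- the induced map on subtypes. -/
noncomputable def emap (T : Submodule k (V ⊗[k] ↥K)) : ↥(Tpull K V ι T) →ₗ[k] ↥T :=
  LinearMap.codRestrict T ((LinearMap.rTensor ↥K ι) ∘ₗ (Tpull K V ι T).subtype)
    (fun x => x.2)

@[simp] lemma emap_coe (T : Submodule k (V ⊗[k] ↥K)) (x : ↥(Tpull K V ι T)) :
    (emap K V ι T x : V ⊗[k] ↥K) = LinearMap.rTensor ↥K ι ↑x := rfl

lemma evK_rTensor (ξ : V' ⊗[k] ↥K) (b : A) :
    evK K V ((LinearMap.rTensor ↥K ι ξ) ⊗ₜ[k] b)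
      = LinearMap.rTensor A ι (evK K V' (ξ ⊗ₜ[k] b)) := by
  induction ξ using TensorProduct.induction_on with
  | zero => simp
  | tmul v c' => simp
  | add x y hx hy =>
      rw [map_add, TensorProduct.add_tmul, TensorProduct.add_tmul, map_add, map_add, map_add,
        hx, hy]

lemma thT_emap (T : Submodule k (V ⊗[k] ↥K)) (z : ↥(Tpull K V ι T) ⊗[k] A) :
    thT K V T (LinearMap.rTensor A (emap K V ι T) z)
      = LinearMap.rTensor A ι (thT K V' (Tpull K V ι T) z) := by
  induction z using TensorProduct.induction_on with
  | zero => simp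
  | tmul x b => rw [LinearMap.rTensor_tmul, thT_tmul, thT_tmul, emap_coe, evK_rTensor]
  | add x y hx hy => simp only [map_add, hx, hy]

lemma relT_emap (T : Submodule k (V ⊗[k] ↥K)) (z : ↥(Tpull K V ι T) ⊗[k] A)
    (hz : z ∈ relT K V' (Tpull K V ι T)) :
    LinearMap.rTensor A (emap K V ι T) z ∈ relT K V T := by
  refine Submodule.span_induction ?_ ?_ ?_ ?_ hz
  · rintro w ⟨x, c, b, h, rfl⟩
    have hmem : rK K V c ↑(emap K V ι T x) ∈ T := by
      rw [emap_coe, ← rK_rTensor]; exact h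
    have hx' : emap K V ι T (⟨rK K V' c ↑x, h⟩ : ↥(Tpull K V ι T))
        = (⟨rK K V c ↑(emap K V ι T x), hmem⟩ : ↥T) := by
      apply Subtype.ext
      rw [emap_coe, rK_rTensor]
      rfl
    rw [map_sub, LinearMap.rTensor_tmul, LinearMap.rTensor_tmul, hx']
    exact Submodule.subset_span ⟨_, c, b, hmem, rfl⟩
  · simp
  · intro x y _ _ hx hy; rw [map_add]; exact Submodule.add_mem _ hx hy
  · intro r x _ hx; rw [map_smul]; exact Submodule.smul_mem _ r hx

end Pull

end FFaux

section Aux2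

variable {k A : Type u} [Field k] [Ring A] [Algebra k A] (K : Subalgebra k A)

/-- the flatness half of faithful flatness. -/
def P1prop : Prop :=
  ∀ I : Submodule k A, I ≤ Subalgebra.toSubmodule K →
    (∀ x ∈ I, ∀ c ∈ K, x * c ∈ I) →
    ∀ z : ↥I ⊗[k] A, mulMapI I z = 0 →
      z ∈ Submodule.span k {w : ↥I ⊗[k] A |
        ∃ (x : ↥I) (c : A) (a : A) (_ : c ∈ K) (h : (x : A) * c ∈ I),
          w = (⟨(x : A) * c, h⟩ : ↥I) ⊗ₜ[k] a - x ⊗ₜ[k] (c * a)}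

lemma tensor_zero_of_subsingleton {M N : Type u} [AddCommGroup M] [AddCommGroup N]
    [Module k M] [Module k N] [Subsingleton M] (x : M ⊗[k] N) : x = 0 := by
  induction x using TensorProduct.induction_on with
  | zero => rfl
  | tmul m n => rw [Subsingleton.elim m 0, TensorProduct.zero_tmul]
  | add a b ha hb => rw [ha, hb, add_zero]

lemma Wfin (hP1 : P1prop K) :
    ∀ (n : ℕ) (V : Type u) [AddCommGroup V] [Module k V] [FiniteDimensional k V],
      Module.finrank k V = n → ∀ T : Submodule k (V ⊗[k] ↥K), RStab K V T →
      ∀ z : ↥T ⊗[k] A, thT K V T z = 0 → z ∈ relT K V T := by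
  intro n
  induction n with
  | zero =>
      intro V _ _ _ hrank T hT z hz
      have hV : Subsingleton V := by
        rw [← Module.finrank_zero_iff (R := k)]; omega
      have hVK : Subsingleton (V ⊗[k] ↥K) :=
        ⟨fun a b => by
          rw [tensor_zero_of_subsingleton (k := k) a, tensor_zero_of_subsingleton (k := k) b]⟩
      have hTT : Subsingleton ↥T := ⟨fun a b => Subtype.ext (Subsingleton.elim _ _)⟩
      have : z = 0 := tensor_zero_of_subsingleton (k := k) z
      rw [this]; exact zero_mem _
  | succ n ih =>
      intro V _ _ _ hrank T hT z hz
      have hpos : 0 < Module.finrank k V := by omega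
      set B := Module.finBasis k V with hB
      set i0 : Fin (Module.finrank k V) := ⟨0, hpos⟩ with hi0
      set φ : V →ₗ[k] k := B.coord i0 with hφ
      have hφsurj : Function.Surjective φ := by
        intro r
        refine ⟨r • B i0, ?_⟩
        simp [hφ]
      have hkerrank : Module.finrank k ↥(ker φ) = n := by
        have h1 := LinearMap.finrank_range_add_finrank_ker φ
        rw [LinearMap.range_eq_top.mpr hφsurj, finrank_top, Module.finrank_self] at h1
        omega
      set ι : ↥(ker φ) →ₗ[k] V := (ker φ).subtype with hι
      -- the projection maps
      set pK0 : (V ⊗[k] ↥K) →ₗ[k] ↥K :=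
        (TensorProduct.lid k ↥K).toLinearMap ∘ₗ rTensor ↥K φ with hpK0
      set p : (V ⊗[k] ↥K) →ₗ[k] A := K.val.toLinearMap ∘ₗ pK0 with hp
      have p_tmul : ∀ (v : V) (c : ↥K), p (v ⊗ₜ[k] c) = φ v • (c : A) := by
        intro v c; simp [hp, hpK0]
      have p_mem : ∀ ξ, p ξ ∈ K := fun ξ => (pK0 ξ).2
      have p_rK : ∀ (c : ↥K) (ξ : V ⊗[k] ↥K), p (rK K V c ξ) = p ξ * (c : A) := by
        intro c ξ
        induction ξ using TensorProduct.induction_on with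
        | zero => simp
        | tmul v c' =>
            rw [rK_tmul, p_tmul, p_tmul, MulMemClass.coe_mul, smul_mul_assoc]
        | add x y hx hy => rw [map_add, map_add, hx, hy, map_add, add_mul]
      have p_ι : ∀ ξ : ↥(ker φ) ⊗[k] ↥K, p (rTensor ↥K ι ξ) = 0 := by
        intro ξ
        induction ξ using TensorProduct.induction_on with
        | zero => simp
        | tmul v c =>
            rw [rTensor_tmul, p_tmul]
            have : φ (ι v) = 0 := v.2
            rw [this, zero_smul]
        | add x y hx hy => rw [map_add, map_add, hx, hy, add_zero]
      -- the ideal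
      set I : Submodule k A := T.map p with hI
      have hIle : I ≤ Subalgebra.toSubmodule K := by
        rintro _ ⟨ξ, hξ, rfl⟩; exact p_mem ξ
      have hIstab : ∀ x ∈ I, ∀ c ∈ K, x * c ∈ I := by
        rintro _ ⟨ξ, hξ, rfl⟩ c hc
        exact ⟨rK K V ⟨c, hc⟩ ξ, hT _ _ hξ, p_rK _ _⟩
      set pT : ↥T →ₗ[k] ↥I :=
        LinearMap.codRestrict I (p ∘ₗ T.subtype) (fun x => ⟨↑x, x.2, rfl⟩) with hpT
      have pT_coe : ∀ x : ↥T, (pT x : A) = p ↑x := fun x => rfl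
      have hpTsurj : Function.Surjective pT := by
        rintro ⟨y, ξ, hξ, rfl⟩
        exact ⟨⟨ξ, hξ⟩, Subtype.ext rfl⟩
      have sub1 : ∀ (ξ : V ⊗[k] ↥K) (b : A),
          (TensorProduct.lid k A) (rTensor A φ (evK K V (ξ ⊗ₜ[k] b))) = p ξ * b := by
        intro ξ b
        induction ξ using TensorProduct.induction_on with
        | zero => simp
        | tmul v c => rw [evK_tmul, rTensor_tmul, TensorProduct.lid_tmul, p_tmul,
            smul_mul_assoc]
        | add x y hx hy =>
            rw [map_add, TensorProduct.add_tmul, map_add, map_add, map_add, hx, hy, add_mul]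
      have mulz : ∀ w : ↥T ⊗[k] A, mulMapI I (rTensor A pT w)
          = (TensorProduct.lid k A) (rTensor A φ (thT K V T w)) := by
        intro w
        induction w using TensorProduct.induction_on with
        | zero => simp
        | tmul x b =>
            rw [rTensor_tmul, thT_tmul, sub1]
            simp [mulMapI, pT_coe]
        | add x y hx hy => simp only [map_add, hx, hy]
      have hzI : mulMapI I (rTensor A pT z) = 0 := by
        rw [mulz, hz, map_zero, map_zero]
      have hspan := hP1 I hIle hIstab _ hzI
      have hlift : ∀ w ∈ Submodule.span k {w : ↥I ⊗[k] A |
            ∃ (x : ↥I) (c : A) (a : A) (_ : c ∈ K) (h : (x : A) * c ∈ I),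
              w = (⟨(x : A) * c, h⟩ : ↥I) ⊗ₜ[k] a - x ⊗ₜ[k] (c * a)},
          ∃ r ∈ relT K V T, rTensor A pT r = w := by
        intro w hw
        refine Submodule.span_induction ?_ ?_ ?_ ?_ hw
        · rintro w ⟨x, c, b, hc, h, rfl⟩
          obtain ⟨x', hx'⟩ := hpTsurj x
          have hmem : rK K V ⟨c, hc⟩ ↑x' ∈ T := hT _ _ x'.2
          refine ⟨(⟨rK K V ⟨c, hc⟩ ↑x', hmem⟩ : ↥T) ⊗ₜ[k] b - x' ⊗ₜ[k] (c * b),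
            Submodule.subset_span ⟨x', ⟨c, hc⟩, b, hmem, rfl⟩, ?_⟩
          rw [map_sub, rTensor_tmul, rTensor_tmul, hx']
          congr 2
          apply Subtype.ext
          rw [pT_coe, p_rK]
          show p ↑x' * c = (x : A) * c
          rw [← pT_coe, hx']
        · exact ⟨0, zero_mem _, map_zero _⟩
        · rintro w1 w2 _ _ ⟨r1, hr1, e1⟩ ⟨r2, hr2, e2⟩
          exact ⟨r1 + r2, add_mem hr1 hr2, by rw [map_add, e1, e2]⟩
        · rintro c w _ ⟨r, hr, e⟩
          exact ⟨c • r, Submodule.smul_mem _ _ hr, by rw [map_smul, e]⟩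
      obtain ⟨r, hrrel, hre⟩ := hlift _ hspan
      have hz2 : rTensor A pT (z - r) = 0 := by rw [map_sub, hre, sub_self]
      have hexact : Function.Exact (emap K V ι T) pT := by
        intro y
        constructor
        · intro hy
          have h0 : rTensor ↥K φ (↑y : V ⊗[k] ↥K) = 0 := by
            have hpy : p ↑y = 0 := by rw [← pT_coe, hy]; rfl
            have : K.val.toLinearMap (pK0 ↑y) = 0 := hpy
            have h1 : pK0 ↑y = 0 := Subtype.ext this
            have := congrArg (TensorProduct.lid k ↥K).symm h1
            rwa [hpK0, LinearMap.comp_apply, LinearEquiv.coe_coe,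
              LinearEquiv.symm_apply_apply, map_zero] at this
          obtain ⟨ξ, hξ⟩ := (rTensor_exact (↥K)
            (LinearMap.exact_subtype_ker_map φ) hφsurj (↑y : V ⊗[k] ↥K)).mp h0
          refine ⟨⟨ξ, ?_⟩, Subtype.ext hξ⟩
          show rTensor ↥K ι ξ ∈ T
          rw [hξ]; exact y.2
        · rintro ⟨x, rfl⟩
          apply Subtype.ext
          rw [pT_coe]
          show p ↑(emap K V ι T x) = ↑(0 : ↥I)
          rw [emap_coe, p_ι]; rfl
      obtain ⟨y, hy⟩ := ((rTensor_exact A hexact hpTsurj) (z - r)).mp hz2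
      have hθr : thT K V T r = 0 := relT_le_ker K V T hrrel
      have hθy : thT K ↥(ker φ) (Tpull K V ι T) y = 0 := by
        have hinj : Function.Injective (rTensor A ι) :=
          Module.Flat.rTensor_preserves_injective_linearMap ι (Submodule.injective_subtype _)
        apply hinj
        rw [← thT_emap, hy, map_sub, hz, hθr, sub_zero, map_zero]
      have hmemrel := ih ↥(ker φ) hkerrank (Tpull K V ι T) (Tpull_stab K V ι T hT) y hθy
      have hz3 : rTensor A (emap K V ι T) y ∈ relT K V T := relT_emap K V ι T y hmemrel
      have : z = r + rTensor A (emap K V ι T) y := by rw [hy]; abel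
      rw [this]
      exact add_mem hrrel hz3

end Aux2

section Aux3

variable {k A : Type u} [Field k] [Ring A] [Algebra k A] (K : Subalgebra k A)

lemma Wgen (hP1 : P1prop K) (V : Type u) [AddCommGroup V] [Module k V]
    (T : Submodule k (V ⊗[k] ↥K)) (hT : RStab K V T)
    (z : ↥T ⊗[k] A) (hz : thT K V T z = 0) : z ∈ relT K V T := by
  classical
  obtain ⟨s, hs⟩ := TensorProduct.exists_finset z
  have hrep : ∀ pr : ↥T × A, ∃ t : Finset (V × ↥K),
      (↑pr.1 : V ⊗[k] ↥K) = ∑ q ∈ t, q.1 ⊗ₜ[k] q.2 := fun pr => TensorProduct.exists_finset _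
  choose tf htf using hrep
  set V0 : Submodule k V := Submodule.span k
    (↑(s.biUnion (fun pr => (tf pr).image Prod.fst)) : Set V) with hV0
  haveI : FiniteDimensional k ↥V0 :=
    Module.Finite.span_of_finite k (Finset.finite_toSet _)
  set ι0 : ↥V0 →ₗ[k] V := V0.subtype with hι0
  have hmemrange : ∀ pr ∈ s, (↑pr.1 : V ⊗[k] ↥K) ∈ LinearMap.range (rTensor ↥K ι0) := by
    intro pr hpr
    rw [htf pr]
    apply Submodule.sum_mem
    intro q hq
    have hq1 : q.1 ∈ V0 := Submodule.subset_span
      (Finset.mem_coe.mpr (Finset.mem_biUnion.mpr ⟨pr, hpr, Finset.mem_image_of_mem _ hq⟩))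
    exact ⟨(⟨q.1, hq1⟩ : ↥V0) ⊗ₜ[k] q.2, rfl⟩
  set T0 := Tpull K V ι0 T with hT0
  have key : ∀ pr ∈ s, ∃ x0 : ↥T0, emap K V ι0 T x0 = pr.1 := by
    intro pr hpr
    obtain ⟨ξ, hξ⟩ := hmemrange pr hpr
    have hmem : ξ ∈ T0 := by
      show rTensor ↥K ι0 ξ ∈ T
      rw [hξ]; exact pr.1.2
    exact ⟨⟨ξ, hmem⟩, Subtype.ext hξ⟩
  choose x0 hx0 using key
  set y : ↥T0 ⊗[k] A := ∑ pr ∈ s.attach, (x0 ↑pr pr.2) ⊗ₜ[k] (pr : ↥T × A).2 with hy0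
  have hy : rTensor A (emap K V ι0 T) y = z := by
    rw [hs, hy0, map_sum, ← Finset.sum_attach s (fun pr => pr.1 ⊗ₜ[k] pr.2)]
    apply Finset.sum_congr rfl
    intro pr _
    rw [rTensor_tmul, hx0]
  have hθy : thT K ↥V0 T0 y = 0 := by
    have hinj : Function.Injective (rTensor A ι0) :=
      Module.Flat.rTensor_preserves_injective_linearMap ι0 (Submodule.injective_subtype _)
    apply hinj
    rw [← thT_emap, hy, hz, map_zero]
  have hmemrel := Wfin K hP1 (Module.finrank k ↥V0) ↥V0 rfl T0
    (Tpull_stab K V ι0 T hT) y hθy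
  rw [← hy]
  exact relT_emap K V ι0 T y hmemrel

end Aux3

section Aux4

variable {k A : Type u} [Field k] [Ring A] [Algebra k A] (K : Subalgebra k A)

lemma ffKey (hP1 : P1prop K)
    (hP2 : ∀ I : Submodule k A, I ≤ Subalgebra.toSubmodule K →
      (∀ x ∈ I, ∀ c ∈ K, x * c ∈ I) → I ≠ Subalgebra.toSubmodule K →
      Submodule.span k {y : A | ∃ x ∈ I, ∃ a : A, y = x * a} ≠ ⊤)
    {a : A}
    (hδ : (1:A) ⊗ₜ[k] a - a ⊗ₜ[k] (1:A) ∈ relK K) : a ∈ K := by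
  by_contra hnot
  set KS := Subalgebra.toSubmodule K with hKS
  set I : Submodule k A := KS ⊓ KS.comap (LinearMap.mulLeft k a) with hIdef
  have h1I : (1:A) ∉ I := by
    rintro ⟨-, h2⟩
    exact hnot (by simpa using h2 : a ∈ KS)
  have hIle : I ≤ KS := fun x hx => hx.1
  have hIstab : ∀ x ∈ I, ∀ c ∈ K, x * c ∈ I := by
    rintro x ⟨hx1, hx2⟩ c hc
    refine ⟨K.mul_mem hx1 hc, ?_⟩
    show a * (x * c) ∈ KS
    rw [← mul_assoc]
    exact K.mul_mem hx2 hc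
  set IA := Submodule.span k {y : A | ∃ x ∈ I, ∃ a : A, y = x * a} with hIAdef
  have IA_mul : ∀ y ∈ IA, ∀ b : A, y * b ∈ IA := by
    intro y hy b
    refine Submodule.span_induction ?_ ?_ ?_ ?_ hy
    · rintro y ⟨x, hx, b0, rfl⟩
      exact Submodule.subset_span ⟨x, hx, b0 * b, mul_assoc _ _ _⟩
    · rw [zero_mul]; exact zero_mem _
    · intro y1 y2 _ _ h1 h2
      rw [add_mul]; exact add_mem h1 h2
    · intro r y _ h
      rw [smul_mul_assoc]; exact Submodule.smul_mem _ _ h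
  -- the induced module structure on A ⧸ KS
  set g2 : A →ₗ[k] ↥K →ₗ[k] (A ⧸ KS) :=
    ((LinearMap.mul k A).compl₂ K.val.toLinearMap).compr₂ KS.mkQ with hg2
  have g2_apply : ∀ (x : A) (c : ↥K), g2 x c = KS.mkQ (x * ↑c) := fun x c => rfl
  have hg2ker : KS ≤ ker g2 := by
    intro x hx
    rw [mem_ker]
    apply LinearMap.ext; intro c
    rw [g2_apply]
    show _ = (0 : A ⧸ KS)
    rw [Submodule.mkQ_apply, Submodule.Quotient.mk_eq_zero]
    exact K.mul_mem hx c.2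
  set pM : ((A ⧸ KS) ⊗[k] ↥K) →ₗ[k] (A ⧸ KS) := TensorProduct.lift (KS.liftQ g2 hg2ker)
    with hpM
  have pM_mk : ∀ (x : A) (c : ↥K), pM (KS.mkQ x ⊗ₜ[k] c) = KS.mkQ (x * ↑c) := by
    intro x c
    rw [hpM, TensorProduct.lift.tmul, Submodule.mkQ_apply, Submodule.liftQ_apply]
    rfl
  set actM : ↥K → ((A ⧸ KS) →ₗ[k] (A ⧸ KS)) := fun c =>
    Submodule.mapQ KS KS (LinearMap.mulRight k (↑c : A)) (fun x hx => K.mul_mem hx c.2)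
    with hactM
  have actM_mk : ∀ (c : ↥K) (x : A), actM c (KS.mkQ x) = KS.mkQ (x * ↑c) := by
    intro c x
    rw [hactM]
    simp [Submodule.mapQ_apply]
    rfl
  have pM_rK : ∀ (c : ↥K) (ξ : (A ⧸ KS) ⊗[k] ↥K),
      pM (rK K (A ⧸ KS) c ξ) = actM c (pM ξ) := by
    intro c ξ
    induction ξ using TensorProduct.induction_on with
    | zero => simp
    | tmul x c' =>
        obtain ⟨x0, rfl⟩ := KS.mkQ_surjective x
        rw [rK_tmul, pM_mk, pM_mk, actM_mk, MulMemClass.coe_mul, mul_assoc]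
    | add u v hu hv => simp only [map_add, hu, hv]
  set β : ↥K →ₗ[k] (A ⧸ KS) := KS.mkQ ∘ₗ (LinearMap.mulLeft k a) ∘ₗ K.val.toLinearMap
    with hβ
  have β_apply : ∀ c : ↥K, β c = KS.mkQ (a * ↑c) := fun c => rfl
  have actM_β : ∀ c c0 : ↥K, actM c (β c0) = β (c0 * c) := by
    intro c c0
    rw [β_apply, β_apply, actM_mk, MulMemClass.coe_mul, mul_assoc]
  set P : Submodule k ((A ⧸ KS) ⊗[k] ↥K) := (LinearMap.range β).comap pM with hPdef
  have hPstab : RStab K (A ⧸ KS) P := by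
    intro c x hx
    obtain ⟨c0, hc0⟩ := hx
    show pM (rK K (A ⧸ KS) c x) ∈ LinearMap.range β
    rw [pM_rK, ← hc0, actM_β]
    exact ⟨c0 * c, rfl⟩
  set Ssub : Submodule k ((A ⧸ KS) ⊗[k] ↥K) := ker pM with hSdef
  have hSP : Ssub ≤ P := by
    intro x hx
    show pM x ∈ LinearMap.range β
    rw [mem_ker.mp hx]
    exact ⟨0, by rw [map_zero]⟩
  set m : A ⧸ KS := KS.mkQ a with hm
  set s0 : (A ⧸ KS) ⊗[k] ↥K := m ⊗ₜ[k] (1 : ↥K) with hs0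
  have hs0P : s0 ∈ P := by
    show pM s0 ∈ LinearMap.range β
    rw [hs0, hm, pM_mk]
    exact ⟨1, by rw [β_apply]⟩
  -- step 1 : relations over M
  set relM : Submodule k ((A ⧸ KS) ⊗[k] A) := Submodule.span k
    {w : (A ⧸ KS) ⊗[k] A | ∃ (x : A) (c : ↥K) (b : A),
      w = (KS.mkQ (x * ↑c)) ⊗ₜ[k] b - (KS.mkQ x) ⊗ₜ[k] ((c : A) * b)} with hrelM
  have hm1 : m ⊗ₜ[k] (1:A) ∈ relM := by
    have himg : ∀ w ∈ relK K, rTensor A KS.mkQ w ∈ relM := by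
      intro w hw
      refine Submodule.span_induction ?_ ?_ ?_ ?_ hw
      · rintro w ⟨x, b, c, hc, rfl⟩
        rw [map_sub, rTensor_tmul, rTensor_tmul]
        exact Submodule.subset_span ⟨x, ⟨c, hc⟩, b, rfl⟩
      · rw [map_zero]; exact zero_mem _
      · intro w1 w2 _ _ h1 h2
        rw [map_add]; exact add_mem h1 h2
      · intro r w _ h
        rw [map_smul]; exact Submodule.smul_mem _ _ h
    have h2 := himg _ hδ
    have h1 : KS.mkQ (1:A) = 0 := (Submodule.Quotient.mk_eq_zero _).mpr K.one_mem
    rw [map_sub, rTensor_tmul, rTensor_tmul, h1, TensorProduct.zero_tmul, zero_sub] at h2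
    have := Submodule.neg_mem _ h2
    rwa [neg_neg] at this
  -- step 2
  set toF : (A ⧸ KS) →ₗ[k] ((A ⧸ KS) ⊗[k] ↥K) := (TensorProduct.mk k (A ⧸ KS) ↥K).flip 1
    with htoF
  have toF_apply : ∀ x, toF x = x ⊗ₜ[k] (1:↥K) := fun x => rfl
  set relF : Submodule k (((A ⧸ KS) ⊗[k] ↥K) ⊗[k] A) := Submodule.span k
    {w : ((A ⧸ KS) ⊗[k] ↥K) ⊗[k] A | ∃ (ξ : (A ⧸ KS) ⊗[k] ↥K) (c : ↥K) (b : A),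
      w = (rK K (A ⧸ KS) c ξ) ⊗ₜ[k] b - ξ ⊗ₜ[k] ((c : A) * b)} with hrelF
  have hrelF_ker : ∀ w ∈ relF, evK K (A ⧸ KS) w = 0 := by
    intro w hw
    refine Submodule.span_induction ?_ ?_ ?_ ?_ hw
    · rintro w ⟨ξ, c, b, rfl⟩
      rw [map_sub, evK_rK, sub_self]
    · exact map_zero _
    · intro w1 w2 _ _ h1 h2
      rw [map_add, h1, h2, add_zero]
    · intro r w _ h
      rw [map_smul, h, smul_zero]
  have hψrel : ∀ w ∈ relM, rTensor A toF w ∈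
      relF ⊔ LinearMap.range (rTensor A Ssub.subtype) := by
    intro w hw
    refine Submodule.span_induction ?_ ?_ ?_ ?_ hw
    · rintro w ⟨x, c, b, rfl⟩
      rw [map_sub, rTensor_tmul, rTensor_tmul, toF_apply, toF_apply]
      have hs1 : (KS.mkQ (x * ↑c) ⊗ₜ[k] (1:↥K) - KS.mkQ x ⊗ₜ[k] c) ∈ Ssub := by
        show pM _ = 0
        rw [map_sub, pM_mk, pM_mk, OneMemClass.coe_one, mul_one, sub_self]
      have hdecomp : (KS.mkQ (x * ↑c) ⊗ₜ[k] (1:↥K)) ⊗ₜ[k] b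
            - (KS.mkQ x ⊗ₜ[k] (1:↥K)) ⊗ₜ[k] ((c:A) * b)
          = ((KS.mkQ (x * ↑c) ⊗ₜ[k] (1:↥K) - KS.mkQ x ⊗ₜ[k] c) ⊗ₜ[k] b)
            + ((KS.mkQ x ⊗ₜ[k] c) ⊗ₜ[k] b - (KS.mkQ x ⊗ₜ[k] (1:↥K)) ⊗ₜ[k] ((c:A) * b)) := by
        rw [TensorProduct.sub_tmul]; abel
      rw [hdecomp]
      refine Submodule.add_mem _ ?_ ?_
      · exact Submodule.mem_sup_right ⟨(⟨_, hs1⟩ : ↥Ssub) ⊗ₜ[k] b, rfl⟩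
      · refine Submodule.mem_sup_left (Submodule.subset_span ?_)
        refine ⟨KS.mkQ x ⊗ₜ[k] (1:↥K), c, b, ?_⟩
        rw [rK_tmul, one_mul]
    · rw [map_zero]; exact zero_mem _
    · intro w1 w2 _ _ h1 h2
      rw [map_add]; exact add_mem h1 h2
    · intro r w _ h
      rw [map_smul]; exact Submodule.smul_mem _ _ h
  have hsplit := hψrel _ hm1
  have hψm : rTensor A toF (m ⊗ₜ[k] (1:A)) = s0 ⊗ₜ[k] (1:A) := by
    rw [rTensor_tmul, toF_apply, hs0]
  rw [hψm, Submodule.mem_sup] at hsplit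
  obtain ⟨ρ, hρ, w2, hw2, heq⟩ := hsplit
  obtain ⟨σ, rfl⟩ := hw2
  set inclSP : ↥Ssub →ₗ[k] ↥P := Submodule.inclusion hSP with hincl
  set τ : ↥P ⊗[k] A := ((⟨s0, hs0P⟩ : ↥P) ⊗ₜ[k] (1:A)) - rTensor A inclSP σ with hτ
  have hτP : rTensor A P.subtype τ = ρ := by
    have hcomp : rTensor A P.subtype (rTensor A inclSP σ) = rTensor A Ssub.subtype σ := by
      rw [← LinearMap.comp_apply, ← LinearMap.rTensor_comp]
      rfl
    rw [hτ, map_sub, rTensor_tmul, hcomp]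
    exact sub_eq_of_eq_add heq.symm
  have hθτ : thT K (A ⧸ KS) P τ = 0 := by
    show (evK K (A ⧸ KS) ∘ₗ rTensor A P.subtype) τ = 0
    rw [LinearMap.comp_apply, hτP]
    exact hrelF_ker ρ hρ
  have hτrel := Wgen K hP1 (A ⧸ KS) P hPstab τ hθτ
  -- step 4 : the evaluation ω
  set lam : ↥K →ₗ[k] (A ⧸ IA) := IA.mkQ ∘ₗ K.val.toLinearMap with hlam
  have hkerβlam : ker β ≤ ker lam := by
    intro c hc
    rw [mem_ker] at hc ⊢
    have h2 : a * ↑c ∈ KS := by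
      rw [β_apply] at hc
      exact (Submodule.Quotient.mk_eq_zero _).mp hc
    have hcI : (↑c : A) ∈ I := ⟨c.2, h2⟩
    show IA.mkQ ↑c = 0
    rw [Submodule.mkQ_apply, Submodule.Quotient.mk_eq_zero]
    exact Submodule.subset_span ⟨↑c, hcI, 1, (mul_one _).symm⟩
  set ρ0 : ↥(LinearMap.range β) →ₗ[k] (A ⧸ IA) :=
    ((ker β).liftQ lam hkerβlam) ∘ₗ (β.quotKerEquivRange).symm.toLinearMap with hρ0
  have ρ0_β : ∀ (c : ↥K) (h : β c ∈ LinearMap.range β), ρ0 ⟨β c, h⟩ = IA.mkQ ↑c := by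
    intro c h
    rw [hρ0, LinearMap.comp_apply, LinearEquiv.coe_coe]
    have hsymm : (β.quotKerEquivRange).symm ⟨β c, h⟩
        = Submodule.Quotient.mk c := by
      apply (β.quotKerEquivRange).injective
      rw [LinearEquiv.apply_symm_apply]
      exact Subtype.ext (β.quotKerEquivRange_apply_mk c).symm
    rw [hsymm, Submodule.liftQ_apply]
    rfl
  set pMP : ↥P →ₗ[k] ↥(LinearMap.range β) :=
    LinearMap.codRestrict _ (pM ∘ₗ P.subtype) (fun x => x.2) with hpMP
  set ρP : ↥P →ₗ[k] (A ⧸ IA) := ρ0 ∘ₗ pMP with hρP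
  have ρP_val : ∀ (x : ↥P) (c0 : ↥K), pM ↑x = β c0 → ρP x = IA.mkQ ↑c0 := by
    intro x c0 h
    rw [hρP, LinearMap.comp_apply]
    have hx : pMP x = ⟨β c0, ⟨c0, rfl⟩⟩ := Subtype.ext h
    rw [hx]; exact ρ0_β c0 _
  set Lam : A →ₗ[k] A →ₗ[k] (A ⧸ IA) := (LinearMap.mul k A).compr₂ IA.mkQ with hLam
  have hLamker : IA ≤ ker Lam := by
    intro y hy
    rw [mem_ker]
    apply LinearMap.ext; intro b
    show IA.mkQ (y * b) = 0
    rw [Submodule.mkQ_apply, Submodule.Quotient.mk_eq_zero]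
    exact IA_mul y hy b
  set ν : (A ⧸ IA) →ₗ[k] A →ₗ[k] (A ⧸ IA) := IA.liftQ Lam hLamker with hν
  have ν_mk : ∀ (c b : A), ν (IA.mkQ c) b = IA.mkQ (c * b) := by
    intro c b
    rw [hν, Submodule.mkQ_apply, Submodule.liftQ_apply]
    rfl
  set ω : (↥P ⊗[k] A) →ₗ[k] (A ⧸ IA) := TensorProduct.lift (ν ∘ₗ ρP) with hω
  have ω_tmul : ∀ (x : ↥P) (b : A), ω (x ⊗ₜ[k] b) = ν (ρP x) b := by
    intro x b
    rw [hω, TensorProduct.lift.tmul]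
    rfl
  have ω_rel : ∀ w ∈ relT K (A ⧸ KS) P, ω w = 0 := by
    intro w hw
    refine Submodule.span_induction ?_ ?_ ?_ ?_ hw
    · rintro w ⟨x, c, b, h, rfl⟩
      obtain ⟨c0, hc0⟩ := x.2
      have h1 : ρP x = IA.mkQ ↑c0 := ρP_val x c0 hc0.symm
      have h2 : ρP (⟨rK K (A ⧸ KS) c ↑x, h⟩ : ↥P) = IA.mkQ ↑(c0 * c) := by
        apply ρP_val
        show pM (rK K (A ⧸ KS) c ↑x) = β (c0 * c)
        rw [pM_rK, ← hc0, actM_β]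
      rw [map_sub, ω_tmul, ω_tmul, h1, h2, ν_mk, ν_mk, MulMemClass.coe_mul, mul_assoc,
        sub_self]
    · exact map_zero _
    · intro w1 w2 _ _ h1 h2
      rw [map_add, h1, h2, add_zero]
    · intro r w _ h
      rw [map_smul, h, smul_zero]
  have ω_s0 : ω ((⟨s0, hs0P⟩ : ↥P) ⊗ₜ[k] (1:A)) = IA.mkQ 1 := by
    rw [ω_tmul]
    have h1 : ρP ⟨s0, hs0P⟩ = IA.mkQ ↑(1:↥K) := by
      apply ρP_val
      show pM s0 = β 1
      rw [hs0, hm, pM_mk, β_apply]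
    rw [h1, OneMemClass.coe_one, ν_mk, mul_one]
  have ω_σ' : ∀ σ' : ↥Ssub ⊗[k] A, ω (rTensor A inclSP σ') = 0 := by
    intro σ'
    induction σ' using TensorProduct.induction_on with
    | zero => rw [map_zero, map_zero]
    | tmul x b =>
        rw [rTensor_tmul, ω_tmul]
        have h1 : ρP (inclSP x) = IA.mkQ ↑(0:↥K) := by
          apply ρP_val
          show pM ↑(inclSP x) = β 0
          rw [map_zero]
          exact mem_ker.mp x.2
        rw [h1]
        show ν (IA.mkQ 0) b = 0
        rw [ν_mk, zero_mul, Submodule.mkQ_apply, Submodule.Quotient.mk_eq_zero]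
        exact zero_mem _
    | add u v hu hv => rw [map_add, map_add, hu, hv, add_zero]
  have ω_σ : ω (rTensor A inclSP σ) = 0 := ω_σ' σ
  have final : IA.mkQ 1 = 0 := by
    have h0 := ω_rel τ hτrel
    rw [hτ, map_sub, ω_s0, ω_σ, sub_zero] at h0
    exact h0
  have h1IA : (1:A) ∈ IA := by
    rw [Submodule.mkQ_apply, Submodule.Quotient.mk_eq_zero] at final
    exact final
  have hIAtop : IA = ⊤ := by
    rw [Submodule.eq_top_iff']
    intro b
    have := IA_mul 1 h1IA b
    rwa [one_mul] at this
  exact hP2 I hIle hIstab (fun h => h1I (h ▸ (show (1:A) ∈ KS from K.one_mem))) hIAtop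

end Aux4

section Aux5

variable {k A : Type u} [Field k] [Ring A] [Algebra k A] (K : Subalgebra k A)

lemma injKey (hinj : Module.Injective ↥K ↥K) {a : A}
    (hδ : (1:A) ⊗ₜ[k] a - a ⊗ₜ[k] (1:A) ∈ relK K) : a ∈ K := by
  -- the inclusion K → A as a K-linear map
  let f : ↥K →ₗ[↥K] A :=
    { toFun := fun c => (c : A)
      map_add' := fun x y => rfl
      map_smul' := fun c x => rfl }
  have hf : Function.Injective f := fun x y h => Subtype.ext h
  obtain ⟨h, hh⟩ := hinj.out f hf LinearMap.id
  -- h : A →ₗ[↥K] ↥K is a retraction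
  have h1 : h (1 : A) = 1 := hh 1
  have hsmul : ∀ (c : ↥K) (y : A), h ((c : A) * y) = c * h y := fun c y => h.map_smul c y
  -- turn it into a k-linear map
  let hA : A →ₗ[k] A :=
    { toFun := fun y => ((h y : ↥K) : A)
      map_add' := fun x y => by
        show ((h (x + y) : ↥K) : A) = ((h x : ↥K) : A) + ((h y : ↥K) : A)
        rw [map_add]; rfl
      map_smul' := fun r y => by
        show ((h (r • y) : ↥K) : A) = r • ((h y : ↥K) : A)
        have e1 : r • y = ((algebraMap k ↥K r) : A) * y := by
          rw [Subalgebra.coe_algebraMap, ← Algebra.smul_def]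
        rw [e1, hsmul, MulMemClass.coe_mul, Subalgebra.coe_algebraMap, ← Algebra.smul_def] }
  let Φ : (A ⊗[k] A) →ₗ[k] A := TensorProduct.lift ((LinearMap.mul k A).compl₂ hA)
  have Φ_tmul : ∀ (x y : A), Φ (x ⊗ₜ[k] y) = x * ((h y : ↥K) : A) := fun x y => by
    simp [Φ, hA]
  have hΦrel : ∀ w ∈ relK K, Φ w = 0 := by
    intro w hw
    refine Submodule.span_induction ?_ ?_ ?_ ?_ hw
    · rintro w ⟨x, b, c, hc, rfl⟩
      rw [map_sub, Φ_tmul, Φ_tmul]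
      have e1 : c * b = ((⟨c, hc⟩ : ↥K) : A) * b := rfl
      rw [e1, hsmul]
      rw [MulMemClass.coe_mul]
      show x * c * ↑(h b) - x * (c * ↑(h b)) = 0
      rw [mul_assoc, sub_self]
    · exact map_zero _
    · intro w1 w2 _ _ e1 e2
      rw [map_add, e1, e2, add_zero]
    · intro r w _ e
      rw [map_smul, e, smul_zero]
  have := hΦrel _ hδ
  rw [map_sub, Φ_tmul, Φ_tmul, h1, one_mul] at this
  have h2 : ((h a : ↥K) : A) - a * ((1 : ↥K) : A) = 0 := this
  rw [OneMemClass.coe_one, mul_one] at h2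
  have ha : a = ((h a : ↥K) : A) := (sub_eq_zero.mp h2).symm
  rw [ha]
  exact (h a).2

end Aux5

end Stmt18Aux

/-!
STATEMENT 18: Let `H` be a super-commutative Hopf superalgebra over a field `k`, `A`
an `H`-supercomodule superalgebra with coaction `θ`, and `K` a (homogeneous)
sub-superalgebra of `A` such that the map `Ξ_A : A ⊗_k A → A ⊗_k H`,
`a ⊗ a' ↦ a·θ(a')`, induces an isomorphism `A ⊗_K A ≅ A ⊗_k H` (i.e. `Ξ_A` is
surjective with kernel exactly the relations submodule defining `A ⊗_K A`).  If `A`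
is faithfully flat over `K`, or if `K` is self-injective as a `K`-supermodule, then
`K = A^{co H}`, the subalgebra of `H`-coinvariants.
-/

theorem stmt18 {k HH A : Type u} [Field k] [CharZero k] [Ring HH] [Algebra k HH]
    [Ring A] [Algebra k A]
    (gH : SuperHopf k HH) (hgH : gH.toSuperRing.SuperComm)
    (gA : SuperRing k A) (hgA : gA.SuperComm)
    (C : SuperComodAlg k HH A gH gA)
    (K : Subalgebra k A)
    -- `K` is a sub-superalgebra (homogeneous)
    (hKhom : Subalgebra.toSubmodule K =
      (Subalgebra.toSubmodule K ⊓ gA.grade 0) ⊔ (Subalgebra.toSubmodule K ⊓ gA.grade 1))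
    -- `Ξ_A` induces an isomorphism `A ⊗_K A ≅ A ⊗ H`
    (hXisurj : Function.Surjective (XiLin C))
    (hXiker : LinearMap.ker (XiLin C) = relK K)
    -- `A` is faithfully flat over `K`, or `K` is self-injective
    (hyp : FaithfullyFlatOver K ∨ Module.Injective ↥K ↥K) :
    (K : Set A) = C.coinvariants := by
  have XiLin_tmul : ∀ (x y : A), XiLin C (x ⊗ₜ[k] y) = (x ⊗ₜ[k] (1:HH)) * C.coact y := by
    intro x y
    simp [XiLin]
  ext x
  simp only [SetLike.mem_coe]
  constructor
  · intro hx
    show C.coact x = x ⊗ₜ[k] (1 : HH)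
    have hker : ((1:A) * x) ⊗ₜ[k] (1:A) - (1:A) ⊗ₜ[k] (x * (1:A))
        ∈ LinearMap.ker (XiLin C) := by
      rw [hXiker]
      exact Submodule.subset_span ⟨1, 1, x, hx, rfl⟩
    rw [LinearMap.mem_ker, map_sub, XiLin_tmul, XiLin_tmul, one_mul, mul_one,
      C.coact_one, Algebra.TensorProduct.tmul_mul_tmul, mul_one, mul_one,
      ← Algebra.TensorProduct.one_def, one_mul, sub_eq_zero] at hker
    exact hker.symm
  · intro hx
    have hx' : C.coact x = x ⊗ₜ[k] (1 : HH) := hx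
    have hδ : (1:A) ⊗ₜ[k] x - x ⊗ₜ[k] (1:A) ∈ relK K := by
      rw [← hXiker, LinearMap.mem_ker, map_sub, XiLin_tmul, XiLin_tmul, C.coact_one, hx',
        Algebra.TensorProduct.tmul_mul_tmul, Algebra.TensorProduct.tmul_mul_tmul]
      simp
    rcases hyp with hff | hinj
    · exact ffKey K hff.1 hff.2 hδ
    · exact injKey K hinj hδ
end
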